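/- arXiv:2408.07112 — 7 statements merged into one kernel-verified Lean document; each statement's English description precedes it below -/
import Mathlib

section
/- For every natural number d ≥ 1 and every point x in the hyperplane H_d = {x ∈ ℝ^(d+1) : x_1 + ... + x_(d+1) = 0}, the distance from x to the nearest point of the lattice A*_d is at most sqrt(d(d+2)/(12(d+1))). -/
open Finset MeasureTheory

/-- The hyperplane `H_d = {x ∈ ℝ^(d+1) : ∑ x_i = 0}`. -/
def hyperplaneH (d : ℕ) : Set (EuclideanSpace ℝ (Fin (d + 1))) :=
  {x | ∑ i, x i = 0}

/-- The permutohedral lattice `A*_d`: all points of `H_d` whose coordinate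
differences are integers. -/
def Astar (d : ℕ) : Set (EuclideanSpace ℝ (Fin (d + 1))) :=
  {x | x ∈ hyperplaneH d ∧ ∀ i j, ∃ k : ℤ, x i - x j = (k : ℝ)}

noncomputable def chiAux (a : ℝ) : ℝ → ℝ := fun t => if t ≤ a then 1 else 0

private lemma chiAux_antitone (a : ℝ) : Antitone (chiAux a) := by
  intro s t hst
  unfold chiAux
  split_ifs with h1 h2 <;> norm_num
  exact h2 (hst.trans h1)

private lemma chiAux_intInt (a : ℝ) : IntervalIntegrable (chiAux a) volume 0 1 :=
  (chiAux_antitone a).intervalIntegrable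

private lemma chiAux_mul (a b t : ℝ) : chiAux a t * chiAux b t = chiAux (min a b) t := by
  unfold chiAux
  by_cases h1 : t ≤ a <;> by_cases h2 : t ≤ b <;>
    simp [h1, h2, le_min_iff]

private lemma chiAux_integral (a : ℝ) (h : a ∈ Set.Icc (0:ℝ) 1) :
    ∫ t in (0:ℝ)..1, chiAux a t = a := by
  have : chiAux a = Set.indicator {x : ℝ | x ≤ a} (fun _ => (1:ℝ)) := by
    funext t; simp [chiAux, Set.indicator]
  rw [this, intervalIntegral.integral_indicator h]
  simp

private lemma vAux_eq (a b : ℝ) : (fun t => (a - chiAux a t) * (b - chiAux b t))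
    = fun t => a * b - a * chiAux b t - b * chiAux a t + chiAux (min a b) t := by
  funext t
  rw [← chiAux_mul]
  ring

private lemma vAux_intInt (a b : ℝ) :
    IntervalIntegrable (fun t => (a - chiAux a t) * (b - chiAux b t)) volume 0 1 := by
  rw [vAux_eq]
  exact (((intervalIntegrable_const).sub ((chiAux_intInt b).const_mul a)).sub
    ((chiAux_intInt a).const_mul b)).add (chiAux_intInt (min a b))

private lemma vAux_integral (a b : ℝ) (ha : a ∈ Set.Icc (0:ℝ) 1) (hb : b ∈ Set.Icc (0:ℝ) 1) :
    ∫ t in (0:ℝ)..1, (a - chiAux a t) * (b - chiAux b t) = min a b - a * b := by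
  rw [vAux_eq]
  rw [intervalIntegral.integral_add (((intervalIntegrable_const).sub
      ((chiAux_intInt b).const_mul a)).sub ((chiAux_intInt a).const_mul b))
      (chiAux_intInt (min a b)),
    intervalIntegral.integral_sub ((intervalIntegrable_const).sub
      ((chiAux_intInt b).const_mul a)) ((chiAux_intInt a).const_mul b),
    intervalIntegral.integral_sub (intervalIntegrable_const) ((chiAux_intInt b).const_mul a),
    intervalIntegral.integral_const_mul, intervalIntegral.integral_const_mul,
    intervalIntegral.integral_const, intervalIntegral.integral_const_mul,
    chiAux_integral a ha, chiAux_integral b hb,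
    chiAux_integral (min a b) ⟨le_min ha.1 hb.1, (min_le_left a b).trans ha.2⟩]
  simp
  ring



private lemma sum_range_cast (n : ℕ) : ∑ k ∈ range n, (k : ℝ) = n * (n - 1) / 2 := by
  induction n with
  | zero => simp
  | succ m ih => rw [sum_range_succ, ih]; push_cast; ring

private lemma sum_range_cast_sq (n : ℕ) :
    ∑ k ∈ range n, (k : ℝ) ^ 2 = n * (n - 1) * (2 * n - 1) / 6 := by
  induction n with
  | zero => simp
  | succ m ih => rw [sum_range_succ, ih]; push_cast; ring

private lemma sum_min_index (n : ℕ) (φ : Fin n → ℝ) :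
    ∑ i : Fin n, ∑ j : Fin n, φ (min i j) =
      ∑ k : Fin n, (2 * (n : ℝ) - 2 * (k : ℕ) - 1) * φ k := by
  have inner : ∀ i : Fin n, ∑ j : Fin n, φ (min i j)
      = (∑ j ∈ Iic i, φ j) + ((n : ℝ) - 1 - (i : ℕ)) * φ i := by
    intro i
    have h1 : ∀ j : Fin n, φ (min i j) = if j ≤ i then φ j else φ i := by
      intro j
      rcases le_or_gt j i with h | h
      · rw [min_eq_right h, if_pos h]
      · rw [min_eq_left h.le, if_neg (not_le.2 h)]
    rw [Finset.sum_congr rfl fun j _ => h1 j, Finset.sum_ite]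
    congr 1
    · congr 1; ext j; simp [Finset.mem_Iic]
    · rw [Finset.sum_const, nsmul_eq_mul]
      congr 1
      have h2 : (univ.filter fun j : Fin n => ¬ j ≤ i) = Ioi i := by
        ext j; simp [Finset.mem_Ioi]
      have hi : (i : ℕ) < n := i.isLt
      rw [h2, Fin.card_Ioi, Nat.cast_sub (by omega), Nat.cast_sub (by omega), Nat.cast_one]
  have swap : ∑ i : Fin n, ∑ j ∈ Iic i, φ j = ∑ j : Fin n, ((n : ℝ) - (j : ℕ)) * φ j := by
    rw [Finset.sum_comm' (t' := univ) (s' := fun j => Ici j) (fun i j => by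
      simp [Finset.mem_Iic, Finset.mem_Ici])]
    refine Finset.sum_congr rfl fun j _ => ?_
    rw [Finset.sum_const, nsmul_eq_mul, Fin.card_Ici, Nat.cast_sub (by exact j.isLt.le)]
  rw [Finset.sum_congr rfl fun i _ => inner i, Finset.sum_add_distrib, swap, ← Finset.sum_add_distrib]
  exact Finset.sum_congr rfl fun k _ => by ring

private lemma key_ineq_mono (n : ℕ) (hn : 1 ≤ n) (φ : Fin n → ℝ) (hφ : Monotone φ) :
    ∑ i : Fin n, ∑ j : Fin n, (|φ i - φ j| - (φ i - φ j) ^ 2) ≤ ((n : ℝ) ^ 2 - 1) / 6 := by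
  set A := ∑ k : Fin n, φ k with hA
  set Q := ∑ k : Fin n, φ k ^ 2 with hQ
  set C := ∑ k : Fin n, (2 * ((k : ℕ) : ℝ) + 1 - n) * φ k with hC
  -- sum of |φ i - φ j|
  have habs : ∀ i j : Fin n, |φ i - φ j| = φ i + φ j - 2 * φ (min i j) := by
    intro i j
    rcases le_total i j with h | h
    · rw [min_eq_left h, abs_sub_comm, abs_of_nonneg (by linarith [hφ h])]; ring
    · rw [min_eq_right h, abs_of_nonneg (by linarith [hφ h])]; ring
  have e1 : ∑ i : Fin n, ∑ j : Fin n, |φ i - φ j| = 2 * C := by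
    have h1 : ∀ i : Fin n, ∑ j : Fin n, |φ i - φ j|
        = (n : ℝ) * φ i + A - 2 * ∑ j : Fin n, φ (min i j) := by
      intro i
      rw [Finset.sum_congr rfl fun j _ => habs i j, Finset.sum_sub_distrib,
        Finset.sum_add_distrib, Finset.sum_const, card_univ, Fintype.card_fin,
        ← Finset.mul_sum, nsmul_eq_mul]
    rw [Finset.sum_congr rfl fun i _ => h1 i, Finset.sum_sub_distrib,
      Finset.sum_add_distrib, ← Finset.mul_sum, Finset.sum_const, card_univ,
      Fintype.card_fin, nsmul_eq_mul, ← Finset.mul_sum, sum_min_index, ← hA]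
    have h2 : 2 * C = 2 * (n : ℝ) * A - 2 * ∑ k : Fin n, (2 * (n : ℝ) - 2 * (k : ℕ) - 1) * φ k := by
      rw [hC, hA, Finset.mul_sum, Finset.mul_sum, Finset.mul_sum, ← Finset.sum_sub_distrib]
      exact Finset.sum_congr rfl fun k _ => by ring
    linarith
  -- sum of squares
  have e2 : ∑ i : Fin n, ∑ j : Fin n, (φ i - φ j) ^ 2 = 2 * n * Q - 2 * A ^ 2 := by
    have h1 : ∀ i : Fin n, ∑ j : Fin n, (φ i - φ j) ^ 2
        = (n : ℝ) * φ i ^ 2 - 2 * φ i * A + Q := by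
      intro i
      have : ∀ j : Fin n, (φ i - φ j) ^ 2 = φ i ^ 2 - 2 * φ i * φ j + φ j ^ 2 := fun j => by ring
      rw [Finset.sum_congr rfl fun j _ => this j, Finset.sum_add_distrib,
        Finset.sum_sub_distrib, Finset.sum_const, card_univ, Fintype.card_fin,
        ← Finset.mul_sum, nsmul_eq_mul, ← hA, ← hQ]
    rw [Finset.sum_congr rfl fun i _ => h1 i, Finset.sum_add_distrib, Finset.sum_sub_distrib,
      ← Finset.mul_sum, ← hQ, Finset.sum_const, card_univ, Fintype.card_fin, nsmul_eq_mul]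
    have h2 : ∑ k : Fin n, 2 * φ k * A = 2 * A ^ 2 := by
      rw [← Finset.sum_mul, ← Finset.mul_sum, ← hA]; ring
    rw [h2]; ring
  -- constant sums
  have s1 : ∑ k : Fin n, (2 * ((k : ℕ) : ℝ) + 1 - n) = 0 := by
    rw [Fin.sum_univ_eq_sum_range (fun k => (2 * (k : ℝ) + 1 - n))]
    rw [Finset.sum_sub_distrib, Finset.sum_add_distrib, Finset.sum_const, card_range,
      ← Finset.mul_sum, sum_range_cast, nsmul_eq_mul]
    simp [Finset.sum_const, card_range]
    ring
  have s2 : ∑ k : Fin n, (2 * ((k : ℕ) : ℝ) + 1 - n) ^ 2 = n * ((n : ℝ) ^ 2 - 1) / 3 := by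
    rw [Fin.sum_univ_eq_sum_range (fun k => (2 * (k : ℝ) + 1 - n) ^ 2)]
    have h1 : ∀ k ∈ range n, (2 * (k : ℝ) + 1 - n) ^ 2
        = 4 * (k : ℝ) ^ 2 + (4 - 4 * (n : ℝ)) * (k : ℝ) + (1 - (n : ℝ)) ^ 2 := fun k _ => by ring
    rw [Finset.sum_congr rfl h1, Finset.sum_add_distrib, Finset.sum_add_distrib,
      ← Finset.mul_sum, ← Finset.mul_sum, Finset.sum_const, card_range,
      sum_range_cast, sum_range_cast_sq, nsmul_eq_mul]
    ring
  -- Cauchy–Schwarz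
  have cs : (∑ k : Fin n, (2 * (n : ℝ) * φ k - (2 * ((k : ℕ) : ℝ) + 1 - n))) ^ 2
      ≤ (n : ℝ) * ∑ k : Fin n, (2 * (n : ℝ) * φ k - (2 * ((k : ℕ) : ℝ) + 1 - n)) ^ 2 := by
    have := sq_sum_le_card_mul_sum_sq
      (s := (univ : Finset (Fin n)))
      (f := fun k => 2 * (n : ℝ) * φ k - (2 * ((k : ℕ) : ℝ) + 1 - n))
    simpa using this
  have cs1 : ∑ k : Fin n, (2 * (n : ℝ) * φ k - (2 * ((k : ℕ) : ℝ) + 1 - n)) = 2 * n * A := by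
    rw [Finset.sum_sub_distrib, s1, ← Finset.mul_sum, ← hA]; ring
  have cs2 : ∑ k : Fin n, (2 * (n : ℝ) * φ k - (2 * ((k : ℕ) : ℝ) + 1 - n)) ^ 2
      = 4 * n ^ 2 * Q - 4 * n * C + n * ((n : ℝ) ^ 2 - 1) / 3 := by
    have h1 : ∀ k : Fin n, (2 * (n : ℝ) * φ k - (2 * ((k : ℕ) : ℝ) + 1 - n)) ^ 2
        = 4 * n ^ 2 * φ k ^ 2 - 4 * n * ((2 * ((k : ℕ) : ℝ) + 1 - n) * φ k)
          + (2 * ((k : ℕ) : ℝ) + 1 - n) ^ 2 := fun k => by ring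
    rw [Finset.sum_congr rfl fun k _ => h1 k, Finset.sum_add_distrib, Finset.sum_sub_distrib,
      s2, ← Finset.mul_sum, ← Finset.mul_sum, ← hQ, ← hC]
  -- final algebra
  have goal_eq : ∑ i : Fin n, ∑ j : Fin n, (|φ i - φ j| - (φ i - φ j) ^ 2)
      = 2 * C - (2 * n * Q - 2 * A ^ 2) := by
    rw [← e1, ← e2, ← Finset.sum_sub_distrib]
    exact Finset.sum_congr rfl fun i _ => by rw [← Finset.sum_sub_distrib]
  rw [goal_eq]
  rw [cs1, cs2] at cs
  have hn' : (1 : ℝ) ≤ (n : ℝ) := by exact_mod_cast hn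
  nlinarith [cs, sq_nonneg ((n : ℝ) - 1), sq_nonneg ((n : ℝ) + 1)]

private lemma key_ineq (n : ℕ) (hn : 1 ≤ n) (θ : Fin n → ℝ) :
    ∑ i : Fin n, ∑ j : Fin n, (|θ i - θ j| - (θ i - θ j) ^ 2) ≤ ((n : ℝ) ^ 2 - 1) / 6 := by
  set σ := Tuple.sort θ with hσ
  have hmono : Monotone (θ ∘ σ) := Tuple.monotone_sort θ
  have hre : ∑ i : Fin n, ∑ j : Fin n, (|θ i - θ j| - (θ i - θ j) ^ 2)
      = ∑ i : Fin n, ∑ j : Fin n, (|(θ ∘ σ) i - (θ ∘ σ) j| - ((θ ∘ σ) i - (θ ∘ σ) j) ^ 2) := by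
    rw [← Equiv.sum_comp σ (fun i => ∑ j : Fin n, (|θ i - θ j| - (θ i - θ j) ^ 2))]
    exact Finset.sum_congr rfl fun i _ =>
      (Equiv.sum_comp σ (fun j => (|θ (σ i) - θ j| - (θ (σ i) - θ j) ^ 2))).symm
  rw [hre]
  exact key_ineq_mono n hn (θ ∘ σ) hmono

/-- For every `d ≥ 1` and every `x ∈ H_d`, the distance from `x` to the nearest
point of `A*_d` is at most `√(d(d+2)/(12(d+1)))`. -/
theorem covering_radius_upper_bound (d : ℕ) (hd : 1 ≤ d)
    (x : EuclideanSpace ℝ (Fin (d + 1))) (hx : x ∈ hyperplaneH d) :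
    Metric.infDist x (Astar d) ≤
      Real.sqrt ((d : ℝ) * ((d : ℝ) + 2) / (12 * ((d : ℝ) + 1))) := by
  have hnR : (0:ℝ) < ((d:ℝ) + 1) := by positivity
  set θ : Fin (d+1) → ℝ := fun i => Int.fract (x i) with hθ
  have hθmem : ∀ i, θ i ∈ Set.Icc (0:ℝ) 1 :=
    fun i => ⟨Int.fract_nonneg _, (Int.fract_lt_one _).le⟩
  set v : Fin (d+1) → ℝ → ℝ := fun i t => θ i - chiAux (θ i) t with hv
  set g : ℝ → ℝ :=
    fun t => (∑ i, v i t * v i t) - (∑ i, ∑ j, v i t * v j t) / ((d:ℝ)+1) with hg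
  have hvInt : ∀ i j : Fin (d+1), IntervalIntegrable (fun t => v i t * v j t) volume 0 1 :=
    fun i j => vAux_intInt (θ i) (θ j)
  have hdiagInt : IntervalIntegrable (fun t => ∑ i, v i t * v i t) volume 0 1 := by
    have h : (fun t => ∑ i, v i t * v i t) = ∑ i, (fun t => v i t * v i t) := by
      funext t; simp
    rw [h]; exact IntervalIntegrable.sum _ (fun i _ => hvInt i i)
  have hsumInt : ∀ i, IntervalIntegrable (fun t => ∑ j, v i t * v j t) volume 0 1 := by
    intro i
    have h : (fun t => ∑ j, v i t * v j t) = ∑ j, (fun t => v i t * v j t) := by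
      funext t; simp
    rw [h]; exact IntervalIntegrable.sum _ (fun j _ => hvInt i j)
  have hdblInt : IntervalIntegrable (fun t => ∑ i, ∑ j, v i t * v j t) volume 0 1 := by
    have h : (fun t => ∑ i, ∑ j, v i t * v j t)
        = ∑ i, (fun t => ∑ j, v i t * v j t) := by funext t; simp
    rw [h]; exact IntervalIntegrable.sum _ (fun i _ => hsumInt i)
  have hgInt : IntervalIntegrable g volume 0 1 := hdiagInt.sub (hdblInt.div_const _)
  -- value of the integral
  have hI1 : ∫ t in (0:ℝ)..1, (∑ i, v i t * v i t) = ∑ i, (θ i - θ i * θ i) := by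
    rw [intervalIntegral.integral_finset_sum (fun i _ => hvInt i i)]
    exact Finset.sum_congr rfl fun i _ => by
      rw [vAux_integral _ _ (hθmem i) (hθmem i), min_self]
  have hI2 : ∫ t in (0:ℝ)..1, (∑ i, ∑ j, v i t * v j t)
      = ∑ i, ∑ j, (min (θ i) (θ j) - θ i * θ j) := by
    rw [intervalIntegral.integral_finset_sum (fun i _ => hsumInt i)]
    refine Finset.sum_congr rfl fun i _ => ?_
    rw [intervalIntegral.integral_finset_sum (fun j _ => hvInt i j)]
    exact Finset.sum_congr rfl fun j _ => vAux_integral _ _ (hθmem i) (hθmem j)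
  have hIg : ∫ t in (0:ℝ)..1, g t = (∑ i, (θ i - θ i * θ i))
      - (∑ i, ∑ j, (min (θ i) (θ j) - θ i * θ j)) / ((d:ℝ)+1) := by
    rw [hg, intervalIntegral.integral_sub hdiagInt (hdblInt.div_const _),
      intervalIntegral.integral_div, hI1, hI2]
  -- bound on the integral
  have hIdent : ∑ i, ∑ j, (|θ i - θ j| - (θ i - θ j) ^ 2)
      = 2 * ((d:ℝ)+1) * (∑ i, (θ i - θ i * θ i))
        - 2 * ∑ i, ∑ j, (min (θ i) (θ j) - θ i * θ j) := by
    have hpt : ∀ a b : ℝ, |a - b| - (a - b) ^ 2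
        = (a - a * a) + (b - b * b) - 2 * (min a b - a * b) := by
      intro a b
      rcases le_total a b with h | h
      · rw [min_eq_left h, abs_sub_comm, abs_of_nonneg (by linarith)]; ring
      · rw [min_eq_right h, abs_of_nonneg (by linarith)]; ring
    have hinner : ∀ i, ∑ j, (|θ i - θ j| - (θ i - θ j) ^ 2)
        = ((d:ℝ)+1) * (θ i - θ i * θ i) + (∑ k, (θ k - θ k * θ k))
          - 2 * ∑ j, (min (θ i) (θ j) - θ i * θ j) := by
      intro i
      rw [Finset.sum_congr rfl fun j _ => hpt (θ i) (θ j), Finset.sum_sub_distrib,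
        Finset.sum_add_distrib, Finset.sum_const, card_univ, Fintype.card_fin,
        ← Finset.mul_sum, nsmul_eq_mul]
      push_cast
      ring
    rw [Finset.sum_congr rfl fun i _ => hinner i, Finset.sum_sub_distrib,
      Finset.sum_add_distrib, ← Finset.mul_sum, Finset.sum_const, card_univ,
      Fintype.card_fin, nsmul_eq_mul, ← Finset.mul_sum]
    push_cast
    ring
  have hbound : ∫ t in (0:ℝ)..1, g t ≤ (((d:ℝ)+1) ^ 2 - 1) / (12 * ((d:ℝ)+1)) := by
    have hKI := key_ineq (d+1) (Nat.le_add_left 1 d) θ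
    push_cast at hKI
    rw [hIdent] at hKI
    rw [hIg]
    set P := ∑ i, (θ i - θ i * θ i) with hP
    set M := ∑ i, ∑ j, (min (θ i) (θ j) - θ i * θ j) with hM
    have e1 : P - M / ((d:ℝ)+1) = (2*((d:ℝ)+1)*P - 2*M) / (2*((d:ℝ)+1)) := by
      field_simp
    have e2 : (((d:ℝ)+1)^2 - 1)/(12*((d:ℝ)+1)) = ((((d:ℝ)+1)^2 - 1)/6) / (2*((d:ℝ)+1)) := by
      rw [div_div]; congr 1; ring
    rw [e1, e2]
    exact (div_le_div_iff_of_pos_right (by positivity)).mpr hKI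
  -- choose a good threshold t
  have hprob : IsProbabilityMeasure (volume.restrict (Set.Ioc (0:ℝ) 1)) := ⟨by simp⟩
  obtain ⟨t, ht⟩ := MeasureTheory.exists_le_average
    (μ := volume.restrict (Set.Ioc (0:ℝ) 1)) (IsProbabilityMeasure.ne_zero _) hgInt.1
  have havg : (⨍ a in Set.Ioc (0:ℝ) 1, g a) = ∫ s in (0:ℝ)..1, g s := by
    rw [MeasureTheory.average_eq_integral, ← intervalIntegral.integral_of_le zero_le_one]
  have hgt : g t ≤ (((d:ℝ)+1) ^ 2 - 1) / (12 * ((d:ℝ)+1)) := by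
    rw [havg] at ht; exact le_trans ht hbound
  -- the lattice point
  set S : ℝ := ∑ j, v j t with hS
  set y : EuclideanSpace ℝ (Fin (d+1)) := WithLp.toLp 2 (fun i => x i - v i t + S / ((d:ℝ)+1)) with hy
  have hyval : ∀ k, y k = x k - v k t + S / ((d:ℝ)+1) := fun k => rfl
  have hyA : y ∈ Astar d := by
    refine ⟨?_, ?_⟩
    · show ∑ i, y i = 0
      have hx0 : ∑ i, x i = 0 := hx
      rw [Finset.sum_congr rfl fun k _ => hyval k, Finset.sum_add_distrib,
        Finset.sum_sub_distrib, Finset.sum_const, card_univ, Fintype.card_fin,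
        hx0, ← hS, nsmul_eq_mul]
      push_cast
      field_simp
      ring
    · intro i j
      refine ⟨(⌊x i⌋ + (if t ≤ θ i then 1 else 0)) - (⌊x j⌋ + (if t ≤ θ j then 1 else 0)), ?_⟩
      have hval : ∀ k, y k = (⌊x k⌋ : ℝ) + (if t ≤ θ k then (1:ℝ) else 0) + S / ((d:ℝ)+1) := by
        intro k
        rw [hyval k]
        have : x k - v k t = (x k - Int.fract (x k)) + chiAux (θ k) t := by
          rw [hv]; dsimp only; rw [hθ]; ring
        rw [this, Int.self_sub_fract]
        unfold chiAux
        ring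
      rw [hval i, hval j]
      push_cast
      split_ifs <;> ring
  -- distance to the lattice point
  have hdist : dist x y = Real.sqrt (g t) := by
    rw [EuclideanSpace.dist_eq]
    congr 1
    have hterm : ∀ i, dist (x i) (y i) ^ 2 = (v i t - S / ((d:ℝ)+1)) ^ 2 := by
      intro i
      rw [Real.dist_eq, sq_abs, hyval i]
      ring_nf
    rw [Finset.sum_congr rfl fun i _ => hterm i]
    have hexp : ∀ i, (v i t - S / ((d:ℝ)+1)) ^ 2
        = v i t * v i t - 2 * (S / ((d:ℝ)+1)) * v i t + (S / ((d:ℝ)+1)) ^ 2 := fun i => by ring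
    rw [Finset.sum_congr rfl fun i _ => hexp i, Finset.sum_add_distrib,
      Finset.sum_sub_distrib, ← Finset.mul_sum, ← hS, Finset.sum_const, card_univ,
      Fintype.card_fin, nsmul_eq_mul, hg]
    dsimp only
    rw [← Fintype.sum_mul_sum (fun i => v i t) (fun j => v j t), ← hS]
    push_cast
    field_simp
    ring
  -- conclusion
  have h1 : Metric.infDist x (Astar d) ≤ dist x y := Metric.infDist_le_dist_of_mem hyA
  rw [hdist] at h1
  refine h1.trans (Real.sqrt_le_sqrt ?_)
  have e3 : (d : ℝ) * ((d : ℝ) + 2) / (12 * ((d : ℝ) + 1))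
      = (((d:ℝ)+1) ^ 2 - 1) / (12 * ((d:ℝ)+1)) := by
    congr 1; ring
  rw [e3]
  exact hgt
end

section
/- For d ≥ 1 and x ∈ H_d, the distance D_d(x) from x to the nearest point of A*_d equals sqrt(d(d+2)/(12(d+1))) if and only if the coordinates of x are uniformly distributed modulo 1, i.e., there exist a real number c and a permutation σ of {1, ..., d+1} such that x_(σ(k)) ≡ c + (k-1)/(d+1) (mod 1) for all k ∈ {1, ..., d+1}. -/
/-- The coordinates of `x` are uniformly distributed modulo 1: there are a real
number `c` and a permutation `σ` of the indices such that
`x (σ k) ≡ c + k/(d+1) (mod 1)` for all `k`. -/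
def UnifDistMod1 {d : ℕ} (x : EuclideanSpace ℝ (Fin (d + 1))) : Prop :=
  ∃ c : ℝ, ∃ σ : Equiv.Perm (Fin (d + 1)), ∀ k : Fin (d + 1),
    ∃ m : ℤ, x (σ k) = c + ((k : ℕ) : ℝ) / ((d : ℝ) + 1) + (m : ℝ)

open Finset

namespace AstarAux

/- elementary power sums -/
lemma sum_range_id_real (n : ℕ) : ∑ i ∈ range n, (i : ℝ) = n * (n - 1) / 2 := by
  induction n with
  | zero => simp
  | succ n ih => rw [sum_range_succ, ih]; push_cast; ring

lemma sum_range_sq_real (n : ℕ) :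
    ∑ i ∈ range n, (i : ℝ) ^ 2 = n * (n - 1) * (2 * n - 1) / 6 := by
  induction n with
  | zero => simp
  | succ n ih => rw [sum_range_succ, ih]; push_cast; ring

lemma sum_range_cube_real (n : ℕ) :
    ∑ i ∈ range n, (i : ℝ) ^ 3 = n ^ 2 * (n - 1) ^ 2 / 4 := by
  induction n with
  | zero => simp
  | succ n ih => rw [sum_range_succ, ih]; push_cast; ring

/- the variance-to-pairs identity -/
lemma pairform (n : ℕ) (u : ℕ → ℝ) :
    (n : ℝ) * ∑ i ∈ range n, (u i) ^ 2 - (∑ i ∈ range n, u i) ^ 2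
      = ∑ l ∈ range n, ∑ k ∈ range l, (u k - u l) ^ 2 := by
  induction n with
  | zero => simp
  | succ n ih =>
    rw [sum_range_succ, sum_range_succ, sum_range_succ]
    have hinner : ∑ k ∈ range n, (u k - u n) ^ 2
        = ∑ i ∈ range n, (u i) ^ 2 - 2 * u n * ∑ i ∈ range n, u i
            + n * (u n) ^ 2 := by
      have h : ∀ k, (u k - u n) ^ 2 = (u k) ^ 2 - 2 * u n * u k + (u n) ^ 2 :=
        fun k => by ring
      simp_rw [h]
      rw [sum_add_distrib, sum_sub_distrib, ← mul_sum, sum_const, card_range,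
        nsmul_eq_mul]
    rw [hinner, ← ih]
    push_cast
    ring

lemma sum_ite_lt (n j : ℕ) (hj : j ≤ n) (f : ℕ → ℝ) :
    ∑ i ∈ range n, (if i < j then f i else 0) = ∑ i ∈ range j, f i := by
  rw [← Finset.sum_subset (Finset.range_subset_range.2 hj)
    (fun i _ hi => by rw [if_neg (by simpa using hi)])]
  exact Finset.sum_congr rfl fun i hi => if_pos (Finset.mem_range.1 hi)

lemma tri_swap (n : ℕ) (g : ℕ → ℕ → ℝ) :
    ∑ l ∈ range n, ∑ k ∈ range l, g k l
      = ∑ k ∈ range n, ∑ l ∈ Ico (k + 1) n, g k l := by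
  have h := Finset.sum_Ico_Ico_comm' 0 n g
  simp only [Finset.range_eq_Ico]
  rw [← h]


/-- sum of squared deviations of the `j`-th lift from its mean. -/
noncomputable def Qe (n : ℕ) (a : ℕ → ℝ) (j : ℕ) : ℝ :=
  (∑ i ∈ range n, (a i + if i < j then (1 : ℝ) else 0) ^ 2)
    - ((∑ i ∈ range n, a i) + j) ^ 2 / n

/-- the quasi-periodic extension of `a` (only used for indices `≤ n`). -/
noncomputable def bext (n : ℕ) (a : ℕ → ℝ) (j : ℕ) : ℝ :=
  if j < n then a j else a 0 + 1

/-- weight attached to the `j+1`-st lift. -/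
noncomputable def Wt (n : ℕ) (a : ℕ → ℝ) (j : ℕ) : ℝ :=
  bext n a (j + 1) - bext n a j + 1 / n

lemma sumW (n : ℕ) (hn : 0 < n) (a : ℕ → ℝ) : ∑ j ∈ range n, Wt n a j = 2 := by
  unfold Wt
  rw [sum_add_distrib, Finset.sum_range_sub (bext n a), sum_const, card_range,
    nsmul_eq_mul]
  rw [bext, bext, if_neg (lt_irrefl n), if_pos hn]
  have hn' : (n : ℝ) ≠ 0 := Nat.cast_ne_zero.2 hn.ne'
  field_simp
  ring

lemma Qe_pair (n : ℕ) (hn : 0 < n) (a : ℕ → ℝ) (j : ℕ) (hj : j ≤ n) :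
    (n : ℝ) * Qe n a j
      = ∑ l ∈ range n, ∑ k ∈ range l,
          ((a l - a k) ^ 2 + (1 - 2 * (a l - a k)) *
            (if k < j ∧ j ≤ l then (1 : ℝ) else 0)) := by
  have hn' : (n : ℝ) ≠ 0 := Nat.cast_ne_zero.2 hn.ne'
  have hsum : ∑ i ∈ range n, (a i + if i < j then (1 : ℝ) else 0)
      = (∑ i ∈ range n, a i) + j := by
    rw [sum_add_distrib, sum_ite_lt n j hj (fun _ => (1 : ℝ)), sum_const,
      card_range, nsmul_eq_mul, mul_one]
  have expand : (n : ℝ) * Qe n a j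
      = (n : ℝ) * (∑ i ∈ range n, (a i + if i < j then (1 : ℝ) else 0) ^ 2)
        - (∑ i ∈ range n, (a i + if i < j then (1 : ℝ) else 0)) ^ 2 := by
    unfold Qe
    rw [hsum]
    field_simp
  rw [expand, pairform n (fun i => a i + if i < j then (1 : ℝ) else 0)]
  refine Finset.sum_congr rfl fun l hl => Finset.sum_congr rfl fun k hk => ?_
  have hkl : k < l := mem_range.1 hk
  by_cases h1 : k < j
  · by_cases h2 : j ≤ l
    · rw [if_pos h1, if_neg (by omega), if_pos ⟨h1, h2⟩]
      ring
    · rw [if_pos h1, if_pos (by omega), if_neg (by tauto)]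
      ring
  · rw [if_neg h1, if_neg (by omega), if_neg (by tauto)]
    ring

lemma wsum_Ico (n : ℕ) (hn : 0 < n) (a : ℕ → ℝ) (k l : ℕ) (hkl : k ≤ l)
    (hl : l < n) :
    ∑ j ∈ range n, Wt n a j * (if k < j + 1 ∧ j + 1 ≤ l then (1 : ℝ) else 0)
      = (a l - a k) + ((l : ℝ) - k) / n := by
  have h1 : ∀ j ∈ range n,
      Wt n a j * (if k < j + 1 ∧ j + 1 ≤ l then (1 : ℝ) else 0)
        = if j ∈ Ico k l then Wt n a j else 0 := by
    intro j _
    by_cases h : k < j + 1 ∧ j + 1 ≤ l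
    · rw [if_pos h, if_pos (mem_Ico.2 ⟨by omega, by omega⟩), mul_one]
    · rw [if_neg h, mul_zero,
        if_neg (fun hc => h (by have := mem_Ico.1 hc; omega))]
  rw [Finset.sum_congr rfl h1, Finset.sum_ite_mem,
    Finset.inter_eq_right.2 (fun j hj => mem_range.2 (by have := mem_Ico.1 hj; omega))]
  unfold Wt
  rw [sum_add_distrib, Finset.sum_Ico_eq_sum_range]
  have htel : ∑ j ∈ range (l - k), (bext n a (k + j + 1) - bext n a (k + j))
      = bext n a (k + (l - k)) - bext n a (k + 0) :=
    Finset.sum_range_sub (fun i => bext n a (k + i)) (l - k)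
  rw [htel]
  have e1 : k + (l - k) = l := by omega
  have e2 : k + 0 = k := rfl
  rw [e1, e2, sum_const, Nat.card_Ico, nsmul_eq_mul]
  rw [bext, bext, if_pos hl, if_pos (by omega : k < n)]
  rw [Nat.cast_sub hkl]
  ring

lemma key_identity (n : ℕ) (hn : 0 < n) (a : ℕ → ℝ) :
    ∑ j ∈ range n, Wt n a j * Qe n a (j + 1) = ((n : ℝ) ^ 2 - 1) / (6 * n) := by
  have hn' : (n : ℝ) ≠ 0 := Nat.cast_ne_zero.2 hn.ne'
  apply mul_left_cancel₀ hn'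
  rw [mul_sum]
  have h1 : ∀ j ∈ range n, (n : ℝ) * (Wt n a j * Qe n a (j + 1))
      = ∑ l ∈ range n, ∑ k ∈ range l, Wt n a j *
          ((a l - a k) ^ 2 + (1 - 2 * (a l - a k)) *
            (if k < j + 1 ∧ j + 1 ≤ l then (1 : ℝ) else 0)) := by
    intro j hj
    have h : (n : ℝ) * (Wt n a j * Qe n a (j + 1))
        = Wt n a j * ((n : ℝ) * Qe n a (j + 1)) := by ring
    rw [h, Qe_pair n hn a (j + 1) (mem_range.1 hj), mul_sum]
    exact Finset.sum_congr rfl fun l _ => by rw [mul_sum]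
  rw [Finset.sum_congr rfl h1, Finset.sum_comm,
    Finset.sum_congr rfl (fun (l : ℕ) (_ : l ∈ range n) => Finset.sum_comm)]
  have h3 : ∀ l ∈ range n, ∀ k ∈ range l,
      ∑ j ∈ range n, Wt n a j * ((a l - a k) ^ 2 + (1 - 2 * (a l - a k)) *
          (if k < j + 1 ∧ j + 1 ≤ l then (1 : ℝ) else 0))
      = a l * (1 - 2 * ((l : ℝ) - k) / n) - a k * (1 - 2 * ((l : ℝ) - k) / n)
          + (1 / n) * ((l : ℝ) - k) := by
    intro l hl k hk
    have hexp : ∀ j ∈ range n, Wt n a j * ((a l - a k) ^ 2 + (1 - 2 * (a l - a k)) *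
          (if k < j + 1 ∧ j + 1 ≤ l then (1 : ℝ) else 0))
        = (a l - a k) ^ 2 * Wt n a j + (1 - 2 * (a l - a k)) *
            (Wt n a j * (if k < j + 1 ∧ j + 1 ≤ l then (1 : ℝ) else 0)) :=
      fun j _ => by ring
    rw [Finset.sum_congr rfl hexp, sum_add_distrib, ← mul_sum, ← mul_sum,
      sumW n hn a, wsum_Ico n hn a k l (mem_range.1 hk).le (mem_range.1 hl)]
    ring
  rw [Finset.sum_congr rfl (fun l hl => Finset.sum_congr rfl (h3 l hl))]
  have h4 : ∀ l ∈ range n,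
      ∑ k ∈ range l, (a l * (1 - 2 * ((l : ℝ) - k) / n)
          - a k * (1 - 2 * ((l : ℝ) - k) / n) + (1 / n) * ((l : ℝ) - k))
      = a l * ((l : ℝ) - ((l : ℝ) ^ 2 + l) / n)
          - (∑ k ∈ range l, a k * (1 - 2 * ((l : ℝ) - k) / n))
          + (1 / n) * (((l : ℝ) ^ 2 + l) / 2) := by
    intro l _
    have hs1 : ∑ k ∈ range l, ((l : ℝ) - k) = ((l : ℝ) ^ 2 + l) / 2 := by
      rw [sum_sub_distrib, sum_const, card_range, nsmul_eq_mul,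
        sum_range_id_real]
      ring
    have hs0 : ∑ k ∈ range l, (a l * (1 - 2 * ((l : ℝ) - k) / n))
        = a l * ((l : ℝ) - ((l : ℝ) ^ 2 + l) / n) := by
      have h : ∀ k ∈ range l, a l * (1 - 2 * ((l : ℝ) - k) / n)
          = a l - (2 * a l / n) * ((l : ℝ) - k) := fun k _ => by ring
      rw [Finset.sum_congr rfl h, sum_sub_distrib, ← mul_sum, hs1, sum_const,
        card_range, nsmul_eq_mul]
      field_simp
    rw [sum_add_distrib, sum_sub_distrib, hs0, ← mul_sum, hs1]
  rw [Finset.sum_congr rfl h4]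
  have h5 : ∑ l ∈ range n, ∑ k ∈ range l, a k * (1 - 2 * ((l : ℝ) - k) / n)
      = ∑ l ∈ range n, a l * ((l : ℝ) - ((l : ℝ) ^ 2 + l) / n) := by
    rw [tri_swap n (fun k l => a k * (1 - 2 * ((l : ℝ) - k) / n))]
    refine Finset.sum_congr rfl fun k hk => ?_
    have hk' : k + 1 ≤ n := mem_range.1 hk
    have hsl : ∑ l ∈ Ico (k + 1) n, (l : ℝ)
        = (n : ℝ) * ((n : ℝ) - 1) / 2 - ((k : ℝ) + 1) * k / 2 := by
      rw [Finset.sum_Ico_eq_sub _ hk', sum_range_id_real, sum_range_id_real]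
      push_cast
      ring
    have h : ∀ l ∈ Ico (k + 1) n, a k * (1 - 2 * ((l : ℝ) - k) / n)
        = (a k * (1 + 2 * k / n)) - (2 * a k / n) * (l : ℝ) := fun l _ => by ring
    have hc : ((n - (k + 1) : ℕ) : ℝ) = (n : ℝ) - k - 1 := by
      push_cast [Nat.cast_sub hk']
      ring
    rw [Finset.sum_congr rfl h, sum_sub_distrib, ← mul_sum, ← mul_sum, hsl,
      sum_const, Nat.card_Ico, nsmul_eq_mul, hc]
    field_simp
    ring
  rw [sum_add_distrib, sum_sub_distrib, h5, sub_self, zero_add, ← mul_sum]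
  have h6 : ∑ l ∈ range n, (((l : ℝ) ^ 2 + l) / 2)
      = ((n : ℝ) * ((n : ℝ) - 1) * (2 * n - 1) / 6 + n * ((n : ℝ) - 1) / 2) / 2 := by
    have h : ∀ l ∈ range n, (((l : ℝ) ^ 2 + l) / 2)
        = (1 / 2) * (l : ℝ) ^ 2 + (1 / 2) * l := fun l _ => by ring
    rw [Finset.sum_congr rfl h, sum_add_distrib, ← mul_sum, ← mul_sum,
      sum_range_sq_real, sum_range_id_real]
    ring
  rw [h6]
  field_simp
  ring

lemma Qe_succ_sub (n : ℕ) (a : ℕ → ℝ) (j : ℕ) (hj : j < n) :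
    Qe n a (j + 1) - Qe n a j
      = 2 * a j + 1 - (2 * ((∑ i ∈ range n, a i) + j) + 1) / n := by
  unfold Qe
  have h : (∑ i ∈ range n, (a i + if i < j + 1 then (1:ℝ) else 0) ^ 2)
      - (∑ i ∈ range n, (a i + if i < j then (1:ℝ) else 0) ^ 2)
      = 2 * a j + 1 := by
    rw [← sum_sub_distrib]
    have hterm : ∀ i ∈ range n,
        (a i + if i < j + 1 then (1:ℝ) else 0) ^ 2
          - (a i + if i < j then (1:ℝ) else 0) ^ 2
        = if i = j then 2 * a j + 1 else 0 := by
      intro i _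
      rcases lt_trichotomy i j with h1 | h1 | h1
      · rw [if_pos (Nat.lt_succ_of_lt h1), if_pos h1, if_neg (Nat.ne_of_lt h1)]
        ring
      · subst h1
        rw [if_pos (Nat.lt_succ_self i), if_neg (lt_irrefl i), if_pos rfl]
        ring
      · rw [if_neg (by omega), if_neg (by omega), if_neg (by omega)]
        ring
    rw [Finset.sum_congr rfl hterm, Finset.sum_ite_eq' (range n) j
      (fun _ => 2 * a j + 1), if_pos (mem_range.2 hj)]
  have hn' : (n : ℝ) ≠ 0 := Nat.cast_ne_zero.2 (by omega)
  push_cast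
  field_simp at h ⊢
  nlinarith [h]

lemma Qe_n_eq_zero (n : ℕ) (hn : 0 < n) (a : ℕ → ℝ) : Qe n a n = Qe n a 0 := by
  unfold Qe
  have h1 : ∀ i ∈ range n, (a i + if i < n then (1:ℝ) else 0) ^ 2
      = (a i ^ 2 + 2 * a i + 1) := by
    intro i hi
    rw [if_pos (mem_range.1 hi)]; ring
  have h0 : ∀ i ∈ range n, (a i + if i < 0 then (1:ℝ) else 0) ^ 2 = a i ^ 2 := by
    intro i _
    simp
  rw [Finset.sum_congr rfl h1, Finset.sum_congr rfl h0]
  rw [sum_add_distrib, sum_add_distrib, sum_const, card_range, nsmul_eq_mul,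
    ← mul_sum]
  have hn' : (n : ℝ) ≠ 0 := Nat.cast_ne_zero.2 hn.ne'
  field_simp
  ring

lemma strictMono_int_ge {n : ℕ} {p : Fin n → ℤ} (hp : StrictMono p) :
    ∀ k l : Fin n, k ≤ l → ((l : ℕ) : ℤ) - ((k : ℕ) : ℤ) ≤ p l - p k := by
  suffices h : ∀ m : ℕ, ∀ k l : Fin n, (l : ℕ) = (k : ℕ) + m →
      ((l : ℕ) : ℤ) - ((k : ℕ) : ℤ) ≤ p l - p k by
    intro k l hkl
    exact h ((l : ℕ) - (k : ℕ)) k l (by omega)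
  intro m
  induction m with
  | zero =>
    intro k l hkl
    have : k = l := Fin.ext (by omega)
    subst this
    simp
  | succ m ih =>
    intro k l hkl
    have hl' : (k : ℕ) + m < n := by omega
    set l' : Fin n := ⟨(k : ℕ) + m, hl'⟩ with hl'def
    have h1 := ih k l' rfl
    have h2 : p l' < p l := hp (by simp [hl'def, Fin.lt_def]; omega)
    have : (l' : ℕ) = (k : ℕ) + m := rfl
    omega

/-- sum of squares about any center, of `n` pairwise distinct integers. -/
lemma distinct_int_sq_sum (n : ℕ) (hn : 0 < n) (γ : ℝ) (q : Fin n → ℤ)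
    (hq : Function.Injective q) :
    (n : ℝ) * ((n : ℝ) ^ 2 - 1) / 12 ≤ ∑ k : Fin n, (γ + (q k : ℝ)) ^ 2 := by
  have hnpos : (0 : ℝ) < n := Nat.cast_pos.2 hn
  set τ := Tuple.sort q with hτ
  set p : Fin n → ℤ := q ∘ τ with hp
  have hmono : Monotone p := Tuple.monotone_sort q
  have hsm : StrictMono p := hmono.strictMono_of_injective (hq.comp τ.injective)
  have hge := strictMono_int_ge hsm
  have hre : ∑ k : Fin n, (γ + (q k : ℝ)) ^ 2 = ∑ k : Fin n, (γ + (p k : ℝ)) ^ 2 :=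
    (Equiv.sum_comp τ (fun k => (γ + (q k : ℝ)) ^ 2)).symm
  set u : ℕ → ℝ := fun k => if h : k < n then γ + ((p ⟨k, h⟩ : ℤ) : ℝ) else 0
    with hu'
  have hu : ∑ k : Fin n, (γ + (p k : ℝ)) ^ 2 = ∑ k ∈ range n, (u k) ^ 2 := by
    rw [← Fin.sum_univ_eq_sum_range (fun k => (u k) ^ 2) n]
    refine Finset.sum_congr rfl fun k _ => ?_
    simp only [hu', k.isLt, dif_pos, Fin.eta]
  have hpf := pairform n u
  have hpair : ∀ l ∈ range n, ∀ k ∈ range l, ((l : ℝ) - k) ^ 2 ≤ (u k - u l) ^ 2 := by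
    intro l hl k hk
    have hln : l < n := mem_range.1 hl
    have hkl : k < l := mem_range.1 hk
    have hkn : k < n := hkl.trans hln
    have hle : (⟨k, hkn⟩ : Fin n) ≤ ⟨l, hln⟩ := by simp [Fin.le_def]; omega
    have hg := hge ⟨k, hkn⟩ ⟨l, hln⟩ hle
    have hgr : ((l : ℝ) - k) ≤ ((p ⟨l, hln⟩ : ℤ) : ℝ) - ((p ⟨k, hkn⟩ : ℤ) : ℝ) := by
      have : (((l:ℕ):ℤ):ℝ) - (((k:ℕ):ℤ):ℝ) ≤ ((p ⟨l, hln⟩ : ℤ) : ℝ) - ((p ⟨k, hkn⟩ : ℤ) : ℝ) := by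
        have h2 := (Int.cast_le (R := ℝ)).2 hg
        push_cast at h2 ⊢
        linarith
      push_cast at this ⊢
      linarith
    have hsq : (u k - u l) ^ 2
        = (((p ⟨l, hln⟩ : ℤ) : ℝ) - ((p ⟨k, hkn⟩ : ℤ) : ℝ)) ^ 2 := by
      simp only [hu', dif_pos hkn, dif_pos hln]
      ring
    rw [hsq]
    have h0 : (0 : ℝ) ≤ (l : ℝ) - k := by
      have : (k : ℝ) ≤ l := Nat.cast_le.2 hkl.le
      linarith
    exact pow_le_pow_left₀ h0 hgr 2
  have hsum : ∑ l ∈ range n, ∑ k ∈ range l, ((l : ℝ) - k) ^ 2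
      = (n : ℝ) ^ 2 * ((n : ℝ) ^ 2 - 1) / 12 := by
    have hil : ∀ l ∈ range n, ∑ k ∈ range l, ((l : ℝ) - k) ^ 2
        = (1 / 3) * (l : ℝ) ^ 3 + (1 / 2) * (l : ℝ) ^ 2 + (1 / 6) * l := by
      intro l _
      have h : ∀ k ∈ range l, ((l : ℝ) - k) ^ 2
          = ((l : ℝ) ^ 2 - (2 * (l : ℝ)) * k) + k ^ 2 := fun k _ => by ring
      rw [Finset.sum_congr rfl h, sum_add_distrib, sum_sub_distrib, sum_const,
        card_range, nsmul_eq_mul, ← mul_sum, sum_range_id_real, sum_range_sq_real]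
      ring
    rw [Finset.sum_congr rfl hil, sum_add_distrib, sum_add_distrib, ← mul_sum,
      ← mul_sum, ← mul_sum, sum_range_cube_real, sum_range_sq_real,
      sum_range_id_real]
    ring
  have hbd : (n : ℝ) ^ 2 * ((n : ℝ) ^ 2 - 1) / 12
      ≤ ∑ l ∈ range n, ∑ k ∈ range l, (u k - u l) ^ 2 := by
    rw [← hsum]
    exact Finset.sum_le_sum fun l hl => Finset.sum_le_sum fun k hk => hpair l hl k hk
  have hfinal : (n : ℝ) * ((n : ℝ) * ((n : ℝ) ^ 2 - 1) / 12)
      ≤ (n : ℝ) * (∑ k ∈ range n, (u k) ^ 2) := by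
    nlinarith [sq_nonneg (∑ k ∈ range n, u k)]
  rw [hre, hu]
  exact le_of_mul_le_mul_left hfinal hnpos

end AstarAux

open AstarAux in
/-- For `d ≥ 1` and `x ∈ H_d`, the distance from `x` to the nearest point of `A*_d`
equals `√(d(d+2)/(12(d+1)))` if and only if the coordinates of `x` are uniformly
distributed modulo 1. -/
theorem infDist_eq_max_iff_unifDist (d : ℕ) (hd : 1 ≤ d)
    (x : EuclideanSpace ℝ (Fin (d + 1))) (hx : x ∈ hyperplaneH d) :
    Metric.infDist x (Astar d) =
        Real.sqrt ((d : ℝ) * ((d : ℝ) + 2) / (12 * ((d : ℝ) + 1))) ↔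
      UnifDistMod1 x := by
  classical
  have hn : 0 < d + 1 := Nat.succ_pos d
  have hnR : (0 : ℝ) < ((d + 1 : ℕ) : ℝ) := by exact_mod_cast hn
  have hnR' : ((d + 1 : ℕ) : ℝ) ≠ 0 := hnR.ne'
  have hxsum : ∑ i, x i = 0 := hx
  set M : ℝ := (((d + 1 : ℕ) : ℝ) ^ 2 - 1) / (12 * ((d + 1 : ℕ) : ℝ)) with hM_def
  have h1n : (1 : ℝ) ≤ ((d + 1 : ℕ) : ℝ) := by exact_mod_cast hn
  have hM0 : 0 ≤ M := by
    rw [hM_def]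
    have h2 : (1 : ℝ) ≤ ((d + 1 : ℕ) : ℝ) ^ 2 := by nlinarith
    have h12 : (0 : ℝ) < 12 * ((d + 1 : ℕ) : ℝ) := by positivity
    exact div_nonneg (by linarith) h12.le
  have hMeq : (d : ℝ) * ((d : ℝ) + 2) / (12 * ((d : ℝ) + 1)) = M := by
    rw [hM_def]
    push_cast
    ring_nf
  rw [hMeq]
  -- sorted fractional parts
  set f : Fin (d + 1) → ℝ := fun i => Int.fract (x i) with hf_def
  set σ₀ : Equiv.Perm (Fin (d + 1)) := Tuple.sort f with hσ₀
  set a : ℕ → ℝ :=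
    fun k => if h : k < d + 1 then Int.fract (x (σ₀ ⟨k, h⟩)) else 0 with ha_def
  have hafin : ∀ k : Fin (d + 1), a (k : ℕ) = Int.fract (x (σ₀ k)) := by
    intro k
    simp only [ha_def, k.isLt, dif_pos, Fin.eta]
  have hmono : ∀ k l : ℕ, k ≤ l → l < d + 1 → a k ≤ a l := by
    intro k l hkl hl
    have hk : k < d + 1 := hkl.trans_lt hl
    have h := Tuple.monotone_sort f
      (show (⟨k, hk⟩ : Fin (d + 1)) ≤ ⟨l, hl⟩ from by simpa [Fin.le_def] using hkl)
    simpa only [ha_def, dif_pos hk, dif_pos hl, Function.comp, hf_def] using h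
  have ha0 : ∀ k : ℕ, 0 ≤ a k := by
    intro k
    by_cases h : k < d + 1
    · simp only [ha_def, dif_pos h]
      exact Int.fract_nonneg _
    · simp only [ha_def, dif_neg h]
      exact le_rfl
  have ha1 : ∀ k : ℕ, k < d + 1 → a k < 1 := by
    intro k hk
    simp only [ha_def, dif_pos hk]
    exact Int.fract_lt_one _
  -- the lattice is nonempty
  have hne : (Astar d).Nonempty := by
    refine ⟨0, ⟨?_, fun i j => ⟨0, by simp⟩⟩⟩
    show ∑ i, (0 : EuclideanSpace ℝ (Fin (d + 1))) i = 0
    simp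
  -- construction of lattice points from lifts
  have hconstr : ∀ j : ℕ, j ≤ d + 1 →
      ∃ y ∈ Astar d, dist x y ^ 2 = Qe (d + 1) a j := by
    intro j hj
    set μ : ℝ := ((∑ i ∈ range (d + 1), a i) + j) / ((d + 1 : ℕ) : ℝ) with hμ
    set u : ℕ → ℝ := fun k => a k + (if k < j then 1 else 0) with hu
    have husum : ∑ k ∈ range (d + 1), u k = (∑ i ∈ range (d + 1), a i) + j := by
      simp only [hu]
      rw [sum_add_distrib, sum_ite_lt (d + 1) j hj (fun _ => (1 : ℝ)), sum_const,
        card_range, nsmul_eq_mul, mul_one]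
    set y : EuclideanSpace ℝ (Fin (d + 1)) :=
      WithLp.toLp 2 (fun i => x i - u ((σ₀.symm i : Fin (d + 1)) : ℕ) + μ) with hy
    have hyapp : ∀ i, y i = x i - u ((σ₀.symm i : Fin (d + 1)) : ℕ) + μ :=
      fun i => rfl
    have husum' : ∑ i : Fin (d + 1), u ((σ₀.symm i : Fin (d + 1)) : ℕ)
        = (∑ i ∈ range (d + 1), a i) + j := by
      rw [show (∑ i : Fin (d + 1), u ((σ₀.symm i : Fin (d + 1)) : ℕ))
          = ∑ k : Fin (d + 1), u (k : ℕ) from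
        Equiv.sum_comp σ₀.symm (fun k : Fin (d + 1) => u (k : ℕ)),
        Fin.sum_univ_eq_sum_range (fun k => u k) (d + 1)]
      exact husum
    have hyH : y ∈ hyperplaneH d := by
      show ∑ i, y i = 0
      simp only [hyapp]
      rw [sum_add_distrib, sum_sub_distrib, hxsum, husum', sum_const,
        card_univ, Fintype.card_fin, nsmul_eq_mul, hμ]
      field_simp
      ring
    have hyInt : ∀ i : Fin (d + 1),
        ∃ K : ℤ, x i - u ((σ₀.symm i : Fin (d + 1)) : ℕ) = (K : ℝ) := by
      intro i
      refine ⟨⌊x i⌋ - (if ((σ₀.symm i : Fin (d + 1)) : ℕ) < j then 1 else 0), ?_⟩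
      have h1 : u ((σ₀.symm i : Fin (d + 1)) : ℕ)
          = Int.fract (x i)
            + (if ((σ₀.symm i : Fin (d + 1)) : ℕ) < j then (1 : ℝ) else 0) := by
        simp only [hu]
        rw [hafin (σ₀.symm i), Equiv.apply_symm_apply]
      rw [h1, Int.fract]
      by_cases h2 : ((σ₀.symm i : Fin (d + 1)) : ℕ) < j
      · rw [if_pos h2, if_pos h2]
        push_cast
        ring
      · rw [if_neg h2, if_neg h2]
        push_cast
        ring
    have hyA : y ∈ Astar d := by
      refine ⟨hyH, fun i i' => ?_⟩
      obtain ⟨K, hK⟩ := hyInt i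
      obtain ⟨K', hK'⟩ := hyInt i'
      refine ⟨K - K', ?_⟩
      rw [hyapp, hyapp]
      push_cast
      linarith [hK, hK']
    refine ⟨y, hyA, ?_⟩
    have hdist : dist x y ^ 2 = ∑ i : Fin (d + 1), (x i - y i) ^ 2 := by
      rw [EuclideanSpace.dist_eq,
        Real.sq_sqrt (sum_nonneg fun i _ => sq_nonneg _)]
      exact Finset.sum_congr rfl fun i _ => by rw [Real.dist_eq, sq_abs]
    have hxmy : ∀ i : Fin (d + 1),
        (x i - y i) ^ 2
          = (fun k : Fin (d + 1) => (u (k : ℕ) - μ) ^ 2) (σ₀.symm i) :=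
      fun i => by rw [hyapp]; ring
    rw [hdist, Finset.sum_congr rfl (fun i _ => hxmy i),
      Equiv.sum_comp σ₀.symm (fun k : Fin (d + 1) => (u (k : ℕ) - μ) ^ 2),
      Fin.sum_univ_eq_sum_range (fun k => (u k - μ) ^ 2) (d + 1)]
    unfold Qe
    have hexp : ∀ k ∈ range (d + 1),
        (u k - μ) ^ 2 = ((u k) ^ 2 - 2 * μ * (u k)) + μ ^ 2 := fun k _ => by ring
    rw [Finset.sum_congr rfl hexp, sum_add_distrib, sum_sub_distrib, ← mul_sum,
      husum, sum_const, card_range, nsmul_eq_mul]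
    simp only [hu]
    rw [hμ]
    field_simp
    ring
  -- positivity of the weights
  have hW : ∀ j ∈ range (d + 1), 0 < Wt (d + 1) a j := by
    intro j hj
    have hj' : j < d + 1 := mem_range.1 hj
    have h1 : 0 < 1 / ((d + 1 : ℕ) : ℝ) := by positivity
    unfold Wt bext
    by_cases h : j + 1 < d + 1
    · rw [if_pos h, if_pos hj']
      have := hmono j (j + 1) (Nat.le_succ j) h
      linarith
    · rw [if_neg h, if_pos hj']
      have := ha1 j hj'
      have := ha0 0
      linarith
  have hT2 : ∑ j ∈ range (d + 1), Wt (d + 1) a j * Qe (d + 1) a (j + 1)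
      = 2 * M := by
    rw [key_identity (d + 1) hn a, hM_def]
    field_simp
    ring
  have hWM : ∑ j ∈ range (d + 1), Wt (d + 1) a j * M = 2 * M := by
    rw [← sum_mul, sumW (d + 1) hn a]
  -- always some lift is at most M
  have hexists_le : ∃ j : ℕ, j ≤ d + 1 ∧ Qe (d + 1) a j ≤ M := by
    by_contra hcon
    push_neg at hcon
    have hlt : ∑ j ∈ range (d + 1), Wt (d + 1) a j * M
        < ∑ j ∈ range (d + 1), Wt (d + 1) a j * Qe (d + 1) a (j + 1) := by
      refine Finset.sum_lt_sum_of_nonempty (nonempty_range_iff.2 hn.ne') ?_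
      intro j hj
      exact (mul_lt_mul_iff_right₀ (hW j hj)).2 (hcon (j + 1) (mem_range.1 hj))
    rw [hT2, hWM] at hlt
    exact lt_irrefl _ hlt
  -- the lower bound for uniformly distributed points
  have hlow : UnifDistMod1 x → ∀ y ∈ Astar d, M ≤ dist x y ^ 2 := by
    rintro ⟨c, σ, hσ⟩ y ⟨hy1, hy2⟩
    choose m hm using hσ
    choose z hz using fun k : Fin (d + 1) => hy2 (σ k) (σ 0)
    have hd1 : ((d : ℝ) + 1) ≠ 0 := by positivity
    set γ : ℝ := ((d + 1 : ℕ) : ℝ) * (c - y (σ 0)) with hγ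
    set q : Fin (d + 1) → ℤ := fun k => (k : ℕ) + (d + 1 : ℕ) * (m k - z k)
      with hq_def
    have hqinj : Function.Injective q := by
      intro k1 k2 h
      simp only [hq_def] at h
      have e1 : (k1 : ℕ) < d + 1 := k1.isLt
      have e2 : (k2 : ℕ) < d + 1 := k2.isLt
      have hdvd : ((d : ℤ) + 1) ∣ ((k1 : ℕ) : ℤ) - ((k2 : ℕ) : ℤ) :=
        ⟨(m k2 - z k2) - (m k1 - z k1), by push_cast at h ⊢; linarith⟩
      have hzero : ((k1 : ℕ) : ℤ) - ((k2 : ℕ) : ℤ) = 0 :=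
        Int.eq_zero_of_abs_lt_dvd hdvd (abs_sub_lt_iff.2 ⟨by push_cast; omega,
          by push_cast; omega⟩)
      apply Fin.ext
      omega
    have hterm : ∀ k : Fin (d + 1),
        x (σ k) - y (σ k) = (γ + (q k : ℝ)) / ((d + 1 : ℕ) : ℝ) := by
      intro k
      have h2 : y (σ k) = y (σ 0) + (z k : ℝ) := by linarith [hz k]
      rw [hm k, h2]
      simp only [hq_def, hγ]
      push_cast
      field_simp
      ring
    have hd2 : dist x y ^ 2
        = ∑ k : Fin (d + 1), ((γ + (q k : ℝ)) / ((d + 1 : ℕ) : ℝ)) ^ 2 := by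
      rw [EuclideanSpace.dist_eq,
        Real.sq_sqrt (sum_nonneg fun i _ => sq_nonneg _),
        ← Equiv.sum_comp σ (fun i => dist (x i) (y i) ^ 2)]
      exact Finset.sum_congr rfl fun k _ => by rw [Real.dist_eq, sq_abs, hterm k]
    rw [hd2]
    have hkey := distinct_int_sq_sum (d + 1) hn γ q hqinj
    have heq : ∑ k : Fin (d + 1), ((γ + (q k : ℝ)) / ((d + 1 : ℕ) : ℝ)) ^ 2
        = (∑ k : Fin (d + 1), (γ + (q k : ℝ)) ^ 2) / ((d + 1 : ℕ) : ℝ) ^ 2 := by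
      rw [sum_div]
      exact Finset.sum_congr rfl fun k _ => by rw [div_pow]
    rw [heq, hM_def, div_le_div_iff₀ (by positivity) (by positivity)]
    nlinarith [hkey, hnR]
  -- upper bound from a good lift
  have hub : Metric.infDist x (Astar d) ≤ Real.sqrt M := by
    obtain ⟨j, hjn, hjle⟩ := hexists_le
    obtain ⟨y, hy, hyd⟩ := hconstr j hjn
    calc Metric.infDist x (Astar d) ≤ dist x y := Metric.infDist_le_dist_of_mem hy
    _ = Real.sqrt (dist x y ^ 2) := (Real.sqrt_sq dist_nonneg).symm
    _ ≤ Real.sqrt M := Real.sqrt_le_sqrt (by rw [hyd]; exact hjle)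
  constructor
  · -- infDist maximal → uniformly distributed
    intro heq
    have hge : ∀ j ∈ range (d + 1), M ≤ Qe (d + 1) a (j + 1) := by
      intro j hj
      obtain ⟨y, hy, hyd⟩ := hconstr (j + 1) (mem_range.1 hj)
      have h1 : Real.sqrt M ≤ dist x y := heq ▸ Metric.infDist_le_dist_of_mem hy
      nlinarith [Real.sq_sqrt hM0, Real.sqrt_nonneg M,
        dist_nonneg (x := x) (y := y)]
    have hall : ∀ j ∈ range (d + 1), Qe (d + 1) a (j + 1) = M := by
      by_contra hcon
      push_neg at hcon
      obtain ⟨j0, hj0, hne0⟩ := hcon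
      have hlt : ∑ j ∈ range (d + 1), Wt (d + 1) a j * M
          < ∑ j ∈ range (d + 1), Wt (d + 1) a j * Qe (d + 1) a (j + 1) := by
        refine Finset.sum_lt_sum
          (fun j hj => mul_le_mul_of_nonneg_left (hge j hj) (hW j hj).le)
          ⟨j0, hj0, (mul_lt_mul_iff_right₀ (hW j0 hj0)).2
            (lt_of_le_of_ne (hge j0 hj0) (Ne.symm hne0))⟩
      rw [hT2, hWM] at hlt
      exact lt_irrefl _ hlt
    -- all lifts have the same value, hence the fractional parts are equally spaced
    have hQ0 : Qe (d + 1) a 0 = M := by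
      rw [← Qe_n_eq_zero (d + 1) hn a]
      exact hall d (mem_range.2 (Nat.lt_succ_self d))
    have hQ : ∀ j : ℕ, j ≤ d + 1 → Qe (d + 1) a j = M := by
      intro j hj
      rcases Nat.eq_zero_or_pos j with h0 | hpos
      · rw [h0]
        exact hQ0
      · obtain ⟨j', rfl⟩ := Nat.exists_eq_succ_of_ne_zero hpos.ne'
        exact hall j' (mem_range.2 (by omega))
    have hδ : ∀ j : ℕ, j < d + 1 →
        2 * a j + 1
          - (2 * ((∑ i ∈ range (d + 1), a i) + j) + 1) / ((d + 1 : ℕ) : ℝ)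
          = 0 := by
      intro j hjn
      have h := Qe_succ_sub (d + 1) a j hjn
      rw [hQ (j + 1) (by omega), hQ j (by omega)] at h
      linarith [h]
    have hgap : ∀ j : ℕ, j + 1 < d + 1 →
        a (j + 1) = a j + 1 / ((d + 1 : ℕ) : ℝ) := by
      intro j hj
      have h1 := hδ j (by omega)
      have h2 := hδ (j + 1) hj
      field_simp at h1 h2 ⊢
      push_cast at h1 h2 ⊢
      linarith
    have hform : ∀ k : ℕ, k < d + 1 → a k = a 0 + k / ((d + 1 : ℕ) : ℝ) := by
      intro k
      induction k with
      | zero => intro _; simp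
      | succ k ih =>
        intro hk
        rw [hgap k hk, ih (by omega)]
        push_cast
        ring
    refine ⟨a 0, σ₀, fun k => ⟨⌊x (σ₀ k)⌋, ?_⟩⟩
    have h1 : Int.fract (x (σ₀ k)) = a 0 + ((k : ℕ) : ℝ) / ((d + 1 : ℕ) : ℝ) := by
      rw [← hafin k]
      exact hform k k.isLt
    rw [Int.fract] at h1
    have hcast : ((d : ℝ) + 1) = ((d + 1 : ℕ) : ℝ) := by push_cast; ring
    rw [hcast]
    linarith [h1]
  · -- uniformly distributed → infDist maximal
    intro hunif
    refine le_antisymm hub ?_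
    by_contra hc
    push_neg at hc
    obtain ⟨y, hy, hyd⟩ := (Metric.infDist_lt_iff hne).1 hc
    have h2 := hlow hunif y hy
    nlinarith [Real.sq_sqrt hM0, Real.sqrt_nonneg M,
      dist_nonneg (x := x) (y := y)]
end

section
/- Let d ≥ 1 and let p ∈ ℝ^(d+1) be the point with coordinates p_k = (2(k-1) - d)/(2(d+1)) for k = 1, ..., d+1. Then p lies in the hyperplane H_d, its norm satisfies ‖p‖² = d(d+2)/(12(d+1)), and for every lattice point y ∈ A*_d one has ‖p - y‖ ≥ ‖p‖ (i.e., p is a point of H_d whose nearest lattice point of A*_d is the origin, at distance sqrt(d(d+2)/(12(d+1)))). -/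
open Finset


lemma int_sq_add_nonneg (z : ℝ) (h : ∃ k : ℤ, z = k) : 0 ≤ z ^ 2 + z := by
  obtain ⟨k, rfl⟩ := h
  have h2 : (0:ℤ) ≤ k ^ 2 + k := by
    rcases le_or_gt 0 k with h | h
    · nlinarith
    · nlinarith [Int.lt_iff_add_one_le.mp h]
  exact_mod_cast h2

lemma sum_range_id_real (n : ℕ) : ∑ i ∈ range n, (i:ℝ) = n * (n - 1) / 2 := by
  induction n with
  | zero => simp
  | succ n ih => rw [sum_range_succ, ih]; push_cast; ring

lemma sum_range_sq_real (n : ℕ) : ∑ i ∈ range n, (i:ℝ)^2 = n * (n - 1) * (2*n - 1) / 6 := by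
  induction n with
  | zero => simp
  | succ n ih => rw [sum_range_succ, ih]; push_cast; ring

lemma pair_identity (n : ℕ) (y : ℕ → ℝ) :
    ∑ j ∈ range n, ∑ i ∈ range j, ((y i - y j)^2 + (y i - y j))
    = n * ∑ k ∈ range n, (y k)^2 - (∑ k ∈ range n, y k)^2
      + ∑ k ∈ range n, ((n:ℝ) - 1 - 2*k) * y k := by
  induction n with
  | zero => simp
  | succ n ih =>
    have e1 : ∑ i ∈ range n, ((y i - y n)^2 + (y i - y n))
        = ∑ i ∈ range n, (y i)^2 - 2 * y n * ∑ i ∈ range n, y i + n * (y n)^2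
          + ∑ i ∈ range n, y i - n * y n := by
      rw [show (∑ i ∈ range n, ((y i - y n)^2 + (y i - y n)))
          = ∑ i ∈ range n, ((y i)^2 - 2 * y n * y i + (y n)^2 + y i - y n) from
        sum_congr rfl (fun i _ => by ring)]
      simp [Finset.sum_add_distrib, Finset.sum_sub_distrib, Finset.mul_sum, mul_comm]
      rw [Finset.sum_mul]
    have e2 : ∑ k ∈ range (n+1), (((n:ℝ)+1) - 1 - 2*k) * y k
        = (∑ k ∈ range n, ((n:ℝ) - 1 - 2*k) * y k) + ∑ k ∈ range n, y k
          + (((n:ℝ)+1) - 1 - 2*n) * y n := by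
      rw [sum_range_succ]
      congr 1
      rw [show (∑ k ∈ range n, (((n:ℝ)+1) - 1 - 2*k) * y k)
          = ∑ k ∈ range n, (((n:ℝ) - 1 - 2*k) * y k + y k) from
        sum_congr rfl (fun i _ => by ring)]
      rw [Finset.sum_add_distrib]
    rw [sum_range_succ _ n, e1]
    push_cast
    rw [e2, sum_range_succ (fun k => (y k)^2), sum_range_succ y, ih]
    push_cast
    ring

lemma key_ineq_s4 (n : ℕ) (y : ℕ → ℝ) (hsum : ∑ k ∈ range n, y k = 0)
    (hint : ∀ i j, i < n → j < n → ∃ k : ℤ, y i - y j = k) :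
    0 ≤ n * ∑ k ∈ range n, (y k)^2 + ∑ k ∈ range n, ((n:ℝ) - 1 - 2*k) * y k := by
  have h := pair_identity n y
  rw [hsum] at h
  have hpos : 0 ≤ ∑ j ∈ range n, ∑ i ∈ range j, ((y i - y j)^2 + (y i - y j)) :=
    Finset.sum_nonneg fun j hj => Finset.sum_nonneg fun i hi =>
      int_sq_add_nonneg _ (hint i j (lt_trans (mem_range.mp hi) (mem_range.mp hj))
        (mem_range.mp hj))
  nlinarith [hpos, h]

lemma fin_sum_ext {n : ℕ} (f : Fin n → ℝ) (g : ℕ → ℝ) (h : ∀ i : Fin n, g i = f i) :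
    ∑ k ∈ range n, g k = ∑ i : Fin n, f i := by
  rw [← Fin.sum_univ_eq_sum_range g]; exact sum_congr rfl fun i _ => h i



/-- Let `p ∈ ℝ^(d+1)` have coordinates `p_k = (2k - d)/(2(d+1))` for `k = 0, …, d`
(the vertex of the permutohedron which is the Voronoi cell of the origin of `A*_d`).
Then `p ∈ H_d`, `‖p‖² = d(d+2)/(12(d+1))`, and every lattice point `y ∈ A*_d`
satisfies `‖p - y‖ ≥ ‖p‖`; i.e. the origin is a nearest lattice point of `p`, at
distance `√(d(d+2)/(12(d+1)))`. -/
theorem deep_hole_vertex (d : ℕ) (hd : 1 ≤ d)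
    (p : EuclideanSpace ℝ (Fin (d + 1)))
    (hp : ∀ k : Fin (d + 1), p k = (2 * ((k : ℕ) : ℝ) - (d : ℝ)) / (2 * ((d : ℝ) + 1))) :
    p ∈ hyperplaneH d ∧
    ‖p‖ ^ 2 = (d : ℝ) * ((d : ℝ) + 2) / (12 * ((d : ℝ) + 1)) ∧
    ∀ y ∈ Astar d, ‖p‖ ≤ ‖p - y‖ := by
  have hd1 : (0:ℝ) < (d:ℝ) + 1 := by positivity
  have hS : ∑ i ∈ range (d+1), (i:ℝ) = ((d:ℝ)+1) * d / 2 := by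
    rw [sum_range_id_real]; push_cast; ring
  have hQ : ∑ i ∈ range (d+1), (i:ℝ)^2 = ((d:ℝ)+1) * d * (2*d+1) / 6 := by
    rw [sum_range_sq_real]; push_cast; ring
  have hmem : p ∈ hyperplaneH d := by
    show ∑ i, p i = 0
    rw [← fin_sum_ext p (fun i => (2*(i:ℝ) - d) / (2*((d:ℝ)+1))) (fun i => (hp i).symm)]
    rw [← Finset.sum_div]
    have h1 : ∑ i ∈ range (d+1), (2*(i:ℝ) - (d:ℝ)) = 0 := by
      rw [Finset.sum_sub_distrib, ← Finset.mul_sum, hS, Finset.sum_const, Finset.card_range,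
        nsmul_eq_mul]
      push_cast; ring
    rw [h1, zero_div]
  refine ⟨hmem, ?_, ?_⟩
  · have hnorm : ‖p‖^2 = ∑ i, (p i)^2 := by
      rw [EuclideanSpace.norm_eq]
      rw [Real.sq_sqrt (Finset.sum_nonneg fun i _ => sq_nonneg _)]
      exact sum_congr rfl fun i _ => by rw [Real.norm_eq_abs, sq_abs]
    rw [hnorm,
      ← fin_sum_ext (fun i => (p i)^2) (fun i => ((2*(i:ℝ) - d) / (2*((d:ℝ)+1)))^2)
        (fun i => by simp [hp i])]
    have h2 : ∑ i ∈ range (d+1), (2*(i:ℝ)-(d:ℝ))^2 = ((d:ℝ)+1)*d*(d+2)/3 := by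
      have e : ∀ i ∈ range (d+1), (2*(i:ℝ)-(d:ℝ))^2
          = 4*((i:ℝ)^2) - (4*(d:ℝ))*(i:ℝ) + (d:ℝ)^2 := fun i _ => by ring
      rw [Finset.sum_congr rfl e, Finset.sum_add_distrib, Finset.sum_sub_distrib,
        ← Finset.mul_sum, ← Finset.mul_sum, hS, hQ, Finset.sum_const, Finset.card_range,
        nsmul_eq_mul]
      push_cast; ring
    have e2 : ∀ i ∈ range (d+1), ((2*(i:ℝ) - d) / (2*((d:ℝ)+1)))^2
        = (2*(i:ℝ)-(d:ℝ))^2 / (4*((d:ℝ)+1)^2) := fun i _ => by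
      rw [div_pow]; ring_nf
    rw [Finset.sum_congr rfl e2, ← Finset.sum_div, h2]
    field_simp
    ring
  · intro y hy
    obtain ⟨hy0, hyint⟩ := hy
    set Y : ℕ → ℝ := fun i => if h : i < d+1 then y ⟨i, h⟩ else 0 with hYdef
    have hYf : ∀ i : Fin (d+1), Y i = y i := fun i => by
      simp only [hYdef, i.isLt, dif_pos]
    have hkey := key_ineq_s4 (d+1) Y
      (by rw [fin_sum_ext y Y hYf]; exact hy0)
      (by
        intro i j hi hj
        obtain ⟨k, hk⟩ := hyint ⟨i, hi⟩ ⟨j, hj⟩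
        exact ⟨k, by simp only [hYdef, dif_pos hi, dif_pos hj]; exact hk⟩)
    push_cast at hkey
    rw [fin_sum_ext (fun i => (y i)^2) (fun k => (Y k)^2) (fun i => by simp [hYf i]),
      fin_sum_ext (fun i : Fin (d+1) => ((d:ℝ) + 1 - 1 - 2*((i:ℕ):ℝ)) * y i)
        (fun k => ((d:ℝ) + 1 - 1 - 2*(k:ℝ)) * Y k) (fun i => by simp [hYf i])] at hkey
    have hfin : 0 ≤ ∑ i : Fin (d+1), ((y i)^2*((d:ℝ)+1) + ((d:ℝ) - 2*((i:ℕ):ℝ))*y i) := by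
      rw [Finset.sum_add_distrib, ← Finset.sum_mul]
      have : ∑ i : Fin (d+1), ((d:ℝ) - 2*((i:ℕ):ℝ))*y i
          = ∑ i : Fin (d+1), ((d:ℝ)+1-1-2*((i:ℕ):ℝ))*y i :=
        sum_congr rfl fun i _ => by ring
      rw [this]
      nlinarith [hkey]
    have hip : (inner ℝ p y : ℝ) = ∑ i, p i * y i := by
      simp [PiLp.inner_apply, RCLike.inner_apply, conj_trivial, mul_comm]
    have hy2 : ‖y‖^2 = ∑ i, (y i)^2 := by
      rw [EuclideanSpace.norm_eq, Real.sq_sqrt (Finset.sum_nonneg fun i _ => sq_nonneg _)]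
      exact sum_congr rfl fun i _ => by rw [Real.norm_eq_abs, sq_abs]
    have hstep : (0:ℝ) ≤ ‖y‖^2 - 2 * (inner ℝ p y : ℝ) := by
      have hcalc : ‖y‖^2 - 2 * (inner ℝ p y : ℝ)
          = (1/((d:ℝ)+1)) * ∑ i : Fin (d+1),
              ((y i)^2*((d:ℝ)+1) + ((d:ℝ) - 2*((i:ℕ):ℝ))*y i) := by
        rw [hy2, hip, Finset.mul_sum, Finset.mul_sum, ← Finset.sum_sub_distrib]
        exact sum_congr rfl fun i _ => by rw [hp i]; field_simp; ring
      rw [hcalc]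
      exact mul_nonneg (by positivity) hfin
    have hineq : ‖p‖^2 ≤ ‖p - y‖^2 := by
      rw [norm_sub_sq_real]
      linarith
    nlinarith [norm_nonneg (p - y), norm_nonneg p, hineq]
end

section
/- Let n ≥ 2 and let v = (n/(n+1), -1/(n+1), ..., -1/(n+1)) ∈ ℝ^(n+1). For every P ∈ A_n that is not a real scalar multiple of v, the distance from P to the line ℝ·v is at least sqrt(1 - 1/n), and this bound is attained for some P ∈ A_n (for example P = e_1 - e_2). Consequently, the minimal distance between two distinct parallel lines of the form u + P + ℝ·v, u + Q + ℝ·v with P, Q ∈ A_n is sqrt(1 - 1/n). -/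
/-- The lattice `A_n = ℤ^(n+1) ∩ H_n`. -/
def Alat (n : ℕ) : Set (EuclideanSpace ℝ (Fin (n + 1))) :=
  {x | (∀ k, ∃ m : ℤ, x k = (m : ℝ)) ∧ ∑ i, x i = 0}

/-- The vector `v = (n/(n+1), -1/(n+1), …, -1/(n+1))`, a shortest non-zero
vector of `A*_n`. -/
noncomputable def v (n : ℕ) : EuclideanSpace ℝ (Fin (n + 1)) :=
  WithLp.toLp 2 (fun j => if j = 0 then (n : ℝ) / ((n : ℝ) + 1) else -1 / ((n : ℝ) + 1))

/-- The line `ℝ·v` through the origin in direction `v`. -/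
noncomputable def lineV (n : ℕ) : Set (EuclideanSpace ℝ (Fin (n + 1))) :=
  {y | ∃ t : ℝ, y = t • v n}

/-- The vector `e₁ - e₂ ∈ A_n`. -/
noncomputable def e12 (n : ℕ) : EuclideanSpace ℝ (Fin (n + 1)) :=
  WithLp.toLp 2 (fun k => if k = 0 then 1 else if k = 1 then -1 else 0)

section Aux

open Finset

lemma inner_v (n : ℕ) (x : EuclideanSpace ℝ (Fin (n+1))) (hx : ∑ i, x i = 0) :
    (inner ℝ x (v n) : ℝ) = x 0 := by
  have hne : ((n:ℝ) + 1) ≠ 0 := by positivity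
  have hv : ∀ i : Fin (n+1), v n i = (if i = 0 then (1:ℝ) else 0) - 1/((n:ℝ)+1) := by
    intro i
    by_cases h : i = 0 <;> simp [v, h] <;> field_simp <;> ring
  calc (inner ℝ x (v n) : ℝ) = ∑ i, x i * v n i := by
        simp [PiLp.inner_apply, RCLike.inner_apply, conj_trivial]
        exact Finset.sum_congr rfl fun i _ => mul_comm _ _
    _ = ∑ i, (x i * (if i = 0 then (1:ℝ) else 0) - x i * (1/((n:ℝ)+1))) := by
        refine Finset.sum_congr rfl fun i _ => ?_
        rw [hv i]; ring
    _ = (∑ i, x i * (if i = 0 then (1:ℝ) else 0)) - (∑ i, x i) * (1/((n:ℝ)+1)) := by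
        rw [Finset.sum_sub_distrib, Finset.sum_mul]
    _ = x 0 := by simp [hx]

lemma sum_v (n : ℕ) : ∑ i, v n i = 0 := by
  have : ∑ i, v n i = ∑ i : Fin (n+1), (if i = 0 then (n : ℝ) / ((n : ℝ) + 1) else -1 / ((n : ℝ) + 1)) := rfl
  rw [this, Fin.sum_univ_succ]
  simp [Fin.succ_ne_zero]
  field_simp
  ring

lemma inner_vv (n : ℕ) : (inner ℝ (v n) (v n) : ℝ) = (n : ℝ) / ((n:ℝ)+1) := by
  rw [inner_v n (v n) (sum_v n)]; simp [v]

lemma infDist_line (n : ℕ) (hn : 1 ≤ n) (P : EuclideanSpace ℝ (Fin (n+1)))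
    (hP : ∑ i, P i = 0) :
    Metric.infDist P (lineV n) = ‖P - (P 0 * ((n:ℝ)+1)/n) • v n‖ := by
  have hn0 : (n:ℝ) ≠ 0 := by
    have : (0:ℝ) < n := by exact_mod_cast Nat.lt_of_lt_of_le Nat.zero_lt_one hn
    positivity
  have hn1 : ((n:ℝ)+1) ≠ 0 := by positivity
  set t₀ : ℝ := P 0 * ((n:ℝ)+1)/n with ht₀
  set w := P - t₀ • v n with hw
  have horth : (inner ℝ w (v n) : ℝ) = 0 := by
    rw [hw, inner_sub_left, real_inner_smul_left, inner_v n P hP, inner_vv n]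
    simp only [ht₀]
    field_simp
    ring
  have hmem : t₀ • v n ∈ lineV n := ⟨t₀, rfl⟩
  have hne : (lineV n).Nonempty := ⟨_, hmem⟩
  refine le_antisymm ?_ ?_
  · calc Metric.infDist P (lineV n) ≤ dist P (t₀ • v n) := Metric.infDist_le_dist_of_mem hmem
      _ = ‖w‖ := by rw [dist_eq_norm]
  · rw [Metric.infDist_eq_iInf]
    have : Nonempty (lineV n) := hne.to_subtype
    refine le_ciInf fun ⟨y, t, hy⟩ => ?_
    simp only [hy]
    rw [dist_eq_norm]
    have hdecomp : P - t • v n = w + (t₀ - t) • v n := by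
      rw [hw]; module
    rw [hdecomp]
    have hsq : ‖w‖^2 ≤ ‖w + (t₀ - t) • v n‖^2 := by
      rw [norm_add_sq_real, real_inner_smul_right, horth]
      nlinarith [sq_nonneg ‖(t₀ - t) • v n‖]
    calc ‖w‖ = Real.sqrt (‖w‖^2) := (Real.sqrt_sq (norm_nonneg _)).symm
      _ ≤ Real.sqrt (‖w + (t₀ - t) • v n‖^2) := Real.sqrt_le_sqrt hsq
      _ = _ := Real.sqrt_sq (norm_nonneg _)

lemma norm_w_sq (n : ℕ) (hn : 1 ≤ n) (P : EuclideanSpace ℝ (Fin (n+1)))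
    (hP : ∑ i, P i = 0) :
    ‖P - (P 0 * ((n:ℝ)+1)/n) • v n‖^2
      = ∑ j ∈ Finset.univ.erase (0 : Fin (n+1)), (P j + P 0 / n)^2 := by
  have hn0 : (n:ℝ) ≠ 0 := by
    have : (0:ℝ) < n := by exact_mod_cast Nat.lt_of_lt_of_le Nat.zero_lt_one hn
    positivity
  have hn1 : ((n:ℝ)+1) ≠ 0 := by positivity
  set t₀ : ℝ := P 0 * ((n:ℝ)+1)/n with ht₀
  set w := P - t₀ • v n with hw
  have hwi : ∀ i : Fin (n+1), w i = if i = 0 then 0 else P i + P 0 / n := by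
    intro i
    have : w i = P i - t₀ * v n i := by
      rw [hw]; simp [PiLp.sub_apply, PiLp.smul_apply]
    rw [this]
    by_cases h : i = 0
    · subst h; simp [v, ht₀]; field_simp; ring
    · simp [v, h, ht₀]; field_simp; ring
  have h1 : ‖w‖^2 = ∑ i, (w i)^2 := by
    rw [EuclideanSpace.norm_sq_eq]
    simp [Real.norm_eq_abs, sq_abs]
  have h0 : w 0 = 0 := by rw [hwi 0]; simp
  rw [h1, ← Finset.add_sum_erase Finset.univ _ (Finset.mem_univ (0 : Fin (n+1))), h0]
  rw [zero_pow (by norm_num), zero_add]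
  refine Finset.sum_congr rfl fun j hj => ?_
  rw [hwi j, if_neg (Finset.ne_of_mem_erase hj)]

lemma key_int {ι : Type*} [DecidableEq ι] (s : Finset ι) (q : ι → ℤ)
    (i₀ i₁ : ι) (h₀ : i₀ ∈ s) (h₁ : i₁ ∈ s)
    (hmax : ∀ i ∈ s, q i ≤ q i₀) (hmin : ∀ i ∈ s, q i₁ ≤ q i) (hlt : q i₁ < q i₀) :
    (s.card : ℤ) - 1 ≤ (s.card : ℤ) * ∑ i ∈ s, q i ^ 2 - (∑ i ∈ s, q i)^2 := by
  have hne : i₀ ≠ i₁ := fun h => absurd (h ▸ hlt) (lt_irrefl _)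
  set N : ℤ := (s.card : ℤ) with hN
  set T := ∑ i ∈ s, q i with hT
  have hid : ∑ i ∈ s, ∑ j ∈ s, (q i - q j)^2
      = 2 * (N * ∑ i ∈ s, q i ^ 2 - T^2) := by
    have hexp : ∀ i ∈ s, ∑ j ∈ s, (q i - q j)^2
        = N * q i^2 - 2 * q i * T + ∑ j ∈ s, q j^2 := by
      intro i _
      have : ∀ j ∈ s, (q i - q j)^2 = q i^2 - 2 * q i * q j + q j^2 := fun j _ => by ring
      rw [Finset.sum_congr rfl this, Finset.sum_add_distrib, Finset.sum_sub_distrib,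
        Finset.sum_const, ← Finset.mul_sum, hN, hT]
      ring
    rw [Finset.sum_congr rfl hexp, Finset.sum_add_distrib, Finset.sum_sub_distrib,
      ← Finset.mul_sum, ← Finset.sum_mul, Finset.sum_const, hN, hT]
    rw [← Finset.mul_sum]
    ring
  set r : ι → ℤ := fun i => ∑ j ∈ s, (q i - q j)^2 with hr
  have h₁' : i₁ ∈ s.erase i₀ := Finset.mem_erase.2 ⟨hne.symm, h₁⟩
  have hsplit : ∑ i ∈ s, r i = r i₀ + (r i₁ + ∑ i ∈ (s.erase i₀).erase i₁, r i) := by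
    rw [Finset.add_sum_erase _ _ h₁', Finset.add_sum_erase _ _ h₀]
  have hb₀ : N * q i₀ - T ≤ r i₀ := by
    have : ∀ j ∈ s, q i₀ - q j ≤ (q i₀ - q j)^2 := fun j _ => Int.le_self_sq _
    calc N * q i₀ - T = ∑ j ∈ s, (q i₀ - q j) := by
          rw [Finset.sum_sub_distrib, Finset.sum_const, hN, hT]; ring
      _ ≤ r i₀ := Finset.sum_le_sum this
  have hb₁ : T - N * q i₁ ≤ r i₁ := by
    have : ∀ j ∈ s, q j - q i₁ ≤ (q i₁ - q j)^2 := fun j _ => by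
      have := Int.le_self_sq (q j - q i₁); nlinarith
    calc T - N * q i₁ = ∑ j ∈ s, (q j - q i₁) := by
          rw [Finset.sum_sub_distrib, Finset.sum_const, hN, hT]; ring
      _ ≤ r i₁ := Finset.sum_le_sum this
  have hbrest : ∀ i ∈ (s.erase i₀).erase i₁, (1:ℤ) ≤ r i := by
    intro i hi
    have his : i ∈ s := Finset.mem_of_mem_erase (Finset.mem_of_mem_erase hi)
    have hpair : ({i₀, i₁} : Finset ι) ⊆ s := by
      intro x hx
      rcases Finset.mem_insert.1 hx with h | h
      · exact h ▸ h₀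
      · exact (Finset.mem_singleton.1 h) ▸ h₁
    have hsub : ∑ j ∈ ({i₀, i₁} : Finset ι), (q i - q j)^2 ≤ r i := by
      refine Finset.sum_le_sum_of_subset_of_nonneg hpair fun j _ _ => sq_nonneg _
    rw [Finset.sum_pair hne] at hsub
    have e1 : q i₀ - q i ≤ (q i - q i₀)^2 := by
      have := Int.le_self_sq (q i₀ - q i); nlinarith
    have e2 : q i - q i₁ ≤ (q i - q i₁)^2 := Int.le_self_sq _
    have := hmax i his
    have := hmin i his
    omega
  have hcard2 : ((s.erase i₀).erase i₁).card = s.card - 2 := by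
    rw [Finset.card_erase_of_mem h₁', Finset.card_erase_of_mem h₀]
    omega
  have hcard_ge : 2 ≤ s.card := by
    have h2 : ({i₀, i₁} : Finset ι).card = 2 := Finset.card_pair hne
    calc 2 = ({i₀, i₁} : Finset ι).card := h2.symm
      _ ≤ s.card := Finset.card_le_card (by
        intro x hx
        rcases Finset.mem_insert.1 hx with h | h
        · exact h ▸ h₀
        · exact (Finset.mem_singleton.1 h) ▸ h₁)
  have hrest_sum : (N - 2) ≤ ∑ i ∈ (s.erase i₀).erase i₁, r i := by
    calc N - 2 = (((s.erase i₀).erase i₁).card : ℤ) := by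
          rw [hcard2, hN]; push_cast [hcard_ge]; ring
      _ = ∑ i ∈ (s.erase i₀).erase i₁, (1:ℤ) := by rw [Finset.sum_const]; ring
      _ ≤ _ := Finset.sum_le_sum hbrest
  have hNd : N ≤ N * (q i₀ - q i₁) := by
    have hd : 1 ≤ q i₀ - q i₁ := by omega
    have hN0 : 0 ≤ N := by positivity
    nlinarith
  have hS : 2 * N - 2 ≤ ∑ i ∈ s, r i := by
    rw [hsplit]
    nlinarith
  rw [hr] at hS
  simp only at hS
  rw [hid] at hS
  linarith

lemma one_ne_zero_fin (n : ℕ) (hn : 2 ≤ n) : (1 : Fin (n+1)) ≠ 0 := by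
  have h1 : ((1 : Fin (n+1)) : ℕ) = 1 := by
    rw [Fin.val_one', Nat.mod_eq_of_lt (by omega)]
  intro h
  rw [Fin.ext_iff, h1] at h
  simp at h

lemma main_sum_bound (n : ℕ) (hn : 2 ≤ n) (P : EuclideanSpace ℝ (Fin (n+1)))
    (hPA : P ∈ Alat n) (hPl : P ∉ lineV n) :
    1 - 1/(n:ℝ) ≤ ∑ j ∈ Finset.univ.erase (0 : Fin (n+1)), (P j + P 0 / n)^2 := by
  have hn0 : (n:ℝ) ≠ 0 := by positivity
  have hn1 : ((n:ℝ)+1) ≠ 0 := by positivity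
  obtain ⟨hint, hsum⟩ := hPA
  choose m hm using hint
  set s : Finset (Fin (n+1)) := Finset.univ.erase 0 with hs
  have hcard : s.card = n := by
    rw [hs, Finset.card_erase_of_mem (Finset.mem_univ _), Finset.card_univ, Fintype.card_fin]
    omega
  have h1s : (1 : Fin (n+1)) ∈ s := Finset.mem_erase.2 ⟨one_ne_zero_fin n hn, Finset.mem_univ _⟩
  have hsumZ : m 0 + ∑ j ∈ s, m j = 0 := by
    have h1 : (((m 0 + ∑ j ∈ s, m j : ℤ)) : ℝ) = ∑ i, P i := by
      push_cast
      rw [← Finset.add_sum_erase Finset.univ P (Finset.mem_univ (0 : Fin (n+1))), hm 0]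
      congr 1
      exact Finset.sum_congr rfl fun j _ => (hm j).symm
    rw [hsum] at h1
    exact_mod_cast h1
  have hne : ∃ i ∈ s, ∃ j ∈ s, m i ≠ m j := by
    by_contra h
    push_neg at h
    apply hPl
    refine ⟨-(P 1) * ((n:ℝ)+1), ?_⟩
    have hPk : ∀ k, k ≠ 0 → P k = P 1 := by
      intro k hk
      rw [hm k, hm 1, h k (Finset.mem_erase.2 ⟨hk, Finset.mem_univ _⟩) 1 h1s]
    have hP0 : P 0 = -(n:ℝ) * P 1 := by
      have h2 : ∑ i, P i = P 0 + ∑ j ∈ s, P j :=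
        (Finset.add_sum_erase Finset.univ P (Finset.mem_univ (0 : Fin (n+1)))).symm
      rw [hsum] at h2
      have hconst : ∑ j ∈ s, P j = (n:ℝ) * P 1 := by
        rw [Finset.sum_congr rfl fun j hj => hPk j (Finset.mem_erase.1 hj).1, Finset.sum_const,
          hcard, nsmul_eq_mul]
      rw [hconst] at h2
      linarith
    ext k
    show P k = (-(P 1) * ((n:ℝ)+1)) * v n k
    by_cases hk : k = 0
    · subst hk
      rw [hP0]
      simp only [v, WithLp.ofLp_toLp, if_pos rfl, eq_self_iff_true, if_true]
      field_simp
    · rw [hPk k hk]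
      simp only [v, if_neg hk]
      field_simp
  obtain ⟨i, his, j, hjs, hij⟩ := hne
  obtain ⟨i₀, h₀, hmax⟩ := Finset.exists_max_image s m ⟨1, h1s⟩
  obtain ⟨i₁, h₁, hmin⟩ := Finset.exists_min_image s m ⟨1, h1s⟩
  have hlt : m i₁ < m i₀ := by
    rcases lt_or_ge (m i₁) (m i₀) with h | h
    · exact h
    · exfalso
      apply hij
      have e1 := hmax i his; have e2 := hmin i his
      have e3 := hmax j hjs; have e4 := hmin j hjs
      omega
  have hkey := key_int s m i₀ i₁ h₀ h₁ hmax hmin hlt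
  rw [hcard] at hkey
  set T : ℤ := ∑ i ∈ s, m i with hT
  have hkeyR : ((n:ℝ)) - 1 ≤ (n:ℝ) * (∑ i ∈ s, (m i : ℝ)^2) - (T:ℝ)^2 := by
    have hZ : ((n:ℤ) - 1 : ℤ) ≤ (n:ℤ) * ∑ i ∈ s, m i ^ 2 - T^2 := hkey
    calc ((n:ℝ)) - 1 = (((n:ℤ) - 1 : ℤ) : ℝ) := by push_cast; ring
      _ ≤ (((n:ℤ) * ∑ i ∈ s, m i ^ 2 - T^2 : ℤ) : ℝ) := by exact_mod_cast hZ
      _ = (n:ℝ) * (∑ i ∈ s, (m i : ℝ)^2) - (T:ℝ)^2 := by push_cast; ring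
  have hP0m : P 0 = (m 0 : ℝ) := hm 0
  have hm0T : (m 0 : ℤ) = -T := by omega
  have hgoal : ∑ j ∈ s, (P j + P 0 / n)^2
      = (∑ i ∈ s, (m i : ℝ)^2) - (T:ℝ)^2 / n := by
    have hexp : ∀ j ∈ s, (P j + P 0 / n)^2
        = (m j:ℝ)^2 + (2 * (m 0 : ℝ)/n) * (m j : ℝ) + ((m 0:ℝ)/n)^2 := by
      intro j _
      rw [hm j, hP0m]
      field_simp
      ring
    rw [Finset.sum_congr rfl hexp, Finset.sum_add_distrib, Finset.sum_add_distrib,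
      Finset.sum_const, hcard, ← Finset.mul_sum, nsmul_eq_mul]
    have hTsum : ∑ i ∈ s, (m i : ℝ) = (T : ℝ) := by rw [hT]; push_cast; ring
    have hm0R : (m 0 : ℝ) = -(T:ℝ) := by exact_mod_cast hm0T
    rw [hTsum, hm0R]
    field_simp
    ring
  rw [hgoal]
  have hpos : (0:ℝ) < n := by positivity
  have e1 : 1 - 1/(n:ℝ) = ((n:ℝ) - 1)/n := by field_simp
  have e2 : (∑ i ∈ s, (m i:ℝ)^2) - (T:ℝ)^2/n = ((n:ℝ) * (∑ i ∈ s, (m i:ℝ)^2) - (T:ℝ)^2)/n := by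
    field_simp
  rw [e1, e2]
  gcongr

lemma lower_bound (n : ℕ) (hn : 2 ≤ n) (P : EuclideanSpace ℝ (Fin (n+1)))
    (hPA : P ∈ Alat n) (hPl : P ∉ lineV n) :
    Real.sqrt (1 - 1 / (n : ℝ)) ≤ Metric.infDist P (lineV n) := by
  have hsum := hPA.2
  rw [infDist_line n (by omega) P hsum]
  calc Real.sqrt (1 - 1/(n:ℝ))
      ≤ Real.sqrt (∑ j ∈ Finset.univ.erase (0 : Fin (n+1)), (P j + P 0 / n)^2) :=
        Real.sqrt_le_sqrt (main_sum_bound n hn P hPA hPl)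
    _ = Real.sqrt (‖P - (P 0 * ((n:ℝ)+1)/n) • v n‖^2) := by rw [norm_w_sq n (by omega) P hsum]
    _ = _ := Real.sqrt_sq (norm_nonneg _)

lemma e12_sum (n : ℕ) (hn : 2 ≤ n) : ∑ i, e12 n i = 0 := by
  have h10 : (1 : Fin (n+1)) ≠ 0 := one_ne_zero_fin n hn
  have hsplit : ∀ k : Fin (n+1),
      e12 n k = (if k = 0 then (1:ℝ) else 0) + (if k = 1 then (-1:ℝ) else 0) := by
    intro k
    by_cases h0 : k = 0
    · subst h0; simp [e12, h10.symm]
    · have hnz : ¬ n = 0 := by omega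
      by_cases h1 : k = 1 <;> simp [e12, h0, h1, hnz]
  rw [show ∑ i, e12 n i = ∑ i : Fin (n+1), e12 n i from rfl,
    Finset.sum_congr rfl fun k _ => hsplit k, Finset.sum_add_distrib]
  simp

lemma e12_mem (n : ℕ) (hn : 2 ≤ n) : e12 n ∈ Alat n := by
  constructor
  · intro k
    by_cases h0 : k = 0
    · exact ⟨1, by simp [e12, h0]⟩
    · by_cases h1 : k = 1
      · have hnz : ¬ n = 0 := by omega
        exact ⟨-1, by simp [e12, h0, h1, hnz]⟩
      · exact ⟨0, by simp [e12, h0, h1]⟩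
  · exact e12_sum n hn

lemma e12_not_line (n : ℕ) (hn : 2 ≤ n) : e12 n ∉ lineV n := by
  rintro ⟨t, ht⟩
  set k2 : Fin (n+1) := ⟨2, by omega⟩ with hk2
  have hk20 : k2 ≠ 0 := by
    simp [hk2, Fin.ext_iff]
  have hk21 : k2 ≠ 1 := by
    have h1 : ((1 : Fin (n+1)) : ℕ) = 1 := by rw [Fin.val_one', Nat.mod_eq_of_lt (by omega)]
    intro h
    have h2 : (k2 : ℕ) = ((1 : Fin (n+1)) : ℕ) := congrArg Fin.val h
    rw [h1] at h2
    simp [hk2] at h2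
  have hn1 : ((n:ℝ)+1) ≠ 0 := by positivity
  have h2 : e12 n k2 = t * v n k2 := by rw [ht]; rfl
  have h0 : e12 n 0 = t * v n 0 := by rw [ht]; rfl
  rw [show e12 n k2 = 0 from by simp [e12, hk20, hk21]] at h2
  simp only [v, if_neg hk20] at h2
  have ht0 : t = 0 := by
    field_simp at h2
    linarith
  rw [show e12 n 0 = 1 from by simp [e12], ht0] at h0
  simp at h0

lemma e12_dist (n : ℕ) (hn : 2 ≤ n) :
    Metric.infDist (e12 n) (lineV n) = Real.sqrt (1 - 1 / (n : ℝ)) := by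
  have hn0 : (n:ℝ) ≠ 0 := by positivity
  have hsum := e12_sum n hn
  have h10 : (1 : Fin (n+1)) ≠ 0 := one_ne_zero_fin n hn
  have h1s : (1 : Fin (n+1)) ∈ Finset.univ.erase (0 : Fin (n+1)) :=
    Finset.mem_erase.2 ⟨h10, Finset.mem_univ _⟩
  have he0 : e12 n 0 = 1 := by simp [e12]
  have hterm : ∀ j ∈ Finset.univ.erase (0 : Fin (n+1)),
      (e12 n j + e12 n 0 / n)^2 = if j = 1 then (-1 + 1/(n:ℝ))^2 else (1/(n:ℝ))^2 := by
    intro j hj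
    have hj0 : j ≠ 0 := Finset.ne_of_mem_erase hj
    rw [he0]
    by_cases h1 : j = 1
    · have hnz : ¬ n = 0 := by omega
      simp [e12, hj0, h1, one_div, hnz]
    · simp [e12, hj0, h1, one_div]
  have hsumval : ∑ j ∈ Finset.univ.erase (0 : Fin (n+1)), (e12 n j + e12 n 0 / n)^2
      = 1 - 1/(n:ℝ) := by
    rw [Finset.sum_congr rfl hterm,
      ← Finset.add_sum_erase _ _ h1s, if_pos rfl]
    have hrest : ∀ j ∈ (Finset.univ.erase (0 : Fin (n+1))).erase 1,
        (if j = 1 then (-1 + 1/(n:ℝ))^2 else (1/(n:ℝ))^2) = (1/(n:ℝ))^2 := by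
      intro j hj
      rw [if_neg (Finset.ne_of_mem_erase hj)]
    rw [Finset.sum_congr rfl hrest, Finset.sum_const]
    have hcard : ((Finset.univ.erase (0 : Fin (n+1))).erase 1).card = n - 1 := by
      rw [Finset.card_erase_of_mem h1s, Finset.card_erase_of_mem (Finset.mem_univ _),
        Finset.card_univ, Fintype.card_fin]
      omega
    rw [hcard, nsmul_eq_mul]
    have hc : ((n - 1 : ℕ) : ℝ) = (n:ℝ) - 1 := by
      push_cast [Nat.cast_sub (by omega : 1 ≤ n)]
      ring
    rw [hc]
    field_simp
    ring
  rw [infDist_line n (by omega) (e12 n) hsum]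
  rw [← Real.sqrt_sq (norm_nonneg (e12 n - (e12 n 0 * ((n:ℝ)+1)/n) • v n)),
    norm_w_sq n (by omega) (e12 n) hsum, hsumval]

end Aux

/-- For `n ≥ 2`: every `P ∈ A_n` which is not a real scalar multiple of `v` has
distance at least `√(1 - 1/n)` from the line `ℝ·v`; the bound is attained at
`P = e₁ - e₂ ∈ A_n`; consequently the minimal distance between two distinct
parallel lines `u + P + ℝ·v`, `u + Q + ℝ·v` (with `P, Q ∈ A_n`), which equals
the distance from `P - Q` to `ℝ·v`, has least value `√(1 - 1/n)`. -/
theorem parallel_lines_min_dist (n : ℕ) (hn : 2 ≤ n) :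
    (∀ P ∈ Alat n, P ∉ lineV n →
      Real.sqrt (1 - 1 / (n : ℝ)) ≤ Metric.infDist P (lineV n)) ∧
    (e12 n ∈ Alat n ∧ e12 n ∉ lineV n ∧
      Metric.infDist (e12 n) (lineV n) = Real.sqrt (1 - 1 / (n : ℝ))) ∧
    IsLeast {D : ℝ | ∃ P ∈ Alat n, ∃ Q ∈ Alat n, P - Q ∉ lineV n ∧
        D = Metric.infDist (P - Q) (lineV n)}
      (Real.sqrt (1 - 1 / (n : ℝ))) := by
  refine ⟨fun P hPA hPl => lower_bound n hn P hPA hPl,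
    ⟨e12_mem n hn, e12_not_line n hn, e12_dist n hn⟩, ?_, ?_⟩
  · -- membership : take P = e12, Q = 0
    have h0A : (0 : EuclideanSpace ℝ (Fin (n+1))) ∈ Alat n := by
      refine ⟨fun k => ⟨0, by simp⟩, by simp⟩
    refine ⟨e12 n, e12_mem n hn, 0, h0A, ?_, ?_⟩
    · rw [sub_zero]; exact e12_not_line n hn
    · rw [sub_zero, e12_dist n hn]
  · rintro D ⟨P, hPA, Q, hQA, hPQ, rfl⟩
    have hsubA : P - Q ∈ Alat n := by
      constructor
      · intro k
        obtain ⟨a, ha⟩ := hPA.1 k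
        obtain ⟨b, hb⟩ := hQA.1 k
        exact ⟨a - b, by push_cast; rw [← ha, ← hb]; rfl⟩
      · have : ∑ i, (P - Q) i = (∑ i, P i) - ∑ i, Q i := by
          rw [← Finset.sum_sub_distrib]
          rfl
        rw [this, hPA.2, hQA.2, sub_zero]
    exact lower_bound n hn (P - Q) hsubA hPQ
end

section
/- Let F be a finite field of order n, let α be a generator of the multiplicative group F^×, and for x ∈ F^× let log_α(x) ∈ ZMod(n-1) denote the unique exponent k with α^k = x. Then for any distinct i, j ∈ F, the map r ↦ log_α(i - r) - log_α(j - r) is a bijection from F \ {i, j} onto ZMod(n-1) \ {0}; in particular these n - 2 differences of discrete logarithms are pairwise distinct and nonzero modulo n - 1. -/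
/-- Let `F` be a finite field of order `n`, `α` a generator of `Fˣ`, and
`l : F → ZMod (n-1)` a discrete logarithm to base `α` (i.e. `α ^ (l x).val = x`
for every nonzero `x`). Then for distinct `i, j ∈ F`, the map
`r ↦ l (i - r) - l (j - r)` is a bijection from `F \ {i, j}` onto
`ZMod (n-1) \ {0}`; in particular these `n - 2` differences of discrete
logarithms are pairwise distinct and nonzero mod `n - 1`. -/
theorem discrete_log_differences_bijOn (F : Type*) [Field F] [Fintype F]
    (α : Fˣ) (hα : ∀ x : Fˣ, x ∈ Subgroup.zpowers α)
    (l : F → ZMod (Fintype.card F - 1))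
    (hl : ∀ x : F, x ≠ 0 → (α : F) ^ (l x).val = x)
    (i j : F) (hij : i ≠ j) :
    Set.BijOn (fun r => l (i - r) - l (j - r)) (({i, j} : Set F)ᶜ)
      (({0} : Set (ZMod (Fintype.card F - 1)))ᶜ) := by
  have hcard : Nat.card Fˣ = Fintype.card F - 1 := by
    rw [Nat.card_units, Nat.card_eq_fintype_card]
  have hord : orderOf α = Fintype.card F - 1 := by
    rw [← hcard]; exact orderOf_eq_card_of_forall_mem_zpowers hα
  have hn1pos : 0 < Fintype.card F - 1 := by rw [← hcard]; exact Nat.card_pos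
  haveI : NeZero (Fintype.card F - 1) := ⟨hn1pos.ne'⟩
  set e : ZMod (Fintype.card F - 1) → F := fun a => (α : F) ^ a.val with he
  have hcoe : ∀ k : ℕ, (α : F) ^ k = ((α ^ k : Fˣ) : F) := by
    intro k; push_cast; ring
  have heinj : Function.Injective e := by
    intro a b h
    simp only [he, hcoe] at h
    have h2 : α ^ a.val = α ^ b.val := Units.ext h
    have h3 := (pow_eq_pow_iff_modEq).mp h2
    rw [hord] at h3
    have := (Nat.ModEq.eq_of_lt_of_lt h3 (ZMod.val_lt a) (ZMod.val_lt b))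
    exact ZMod.val_injective _ this
  have headd : ∀ a b : ZMod (Fintype.card F - 1), e (a + b) = e a * e b := by
    intro a b
    simp only [he, ← pow_add]
    have hordF : orderOf (α : F) = Fintype.card F - 1 := by rw [orderOf_units, hord]
    rw [ZMod.val_add]
    have hpm := pow_mod_orderOf (x := (α : F)) (n := a.val + b.val)
    rw [hordF] at hpm
    exact hpm
  have he0 : e 0 = 1 := by simp [he]
  have hene : ∀ a : ZMod (Fintype.card F - 1), e a ≠ 0 := by
    intro a; exact pow_ne_zero _ (Units.ne_zero α)
  have hel : ∀ x : F, x ≠ 0 → e (l x) = x := hl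
  constructor
  · -- MapsTo
    intro r hr
    simp only [Set.mem_insert_iff, Set.mem_singleton_iff, Set.mem_compl_iff, not_or] at hr ⊢
    obtain ⟨hri, hrj⟩ := hr
    have hi : i - r ≠ 0 := sub_ne_zero.mpr (Ne.symm hri)
    have hj : j - r ≠ 0 := sub_ne_zero.mpr (Ne.symm hrj)
    intro h0
    have h1 : l (i - r) = l (j - r) := sub_eq_zero.mp h0
    have h2 : i - r = j - r := by
      rw [← hel _ hi, ← hel _ hj, h1]
    exact hij (sub_left_inj.mp h2)
  · constructor
    · -- InjOn
      intro r hr r' hr' h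
      simp only [Set.mem_insert_iff, Set.mem_singleton_iff, Set.mem_compl_iff, not_or] at hr hr'
      have hi : i - r ≠ 0 := sub_ne_zero.mpr (Ne.symm hr.1)
      have hj : j - r ≠ 0 := sub_ne_zero.mpr (Ne.symm hr.2)
      have hi' : i - r' ≠ 0 := sub_ne_zero.mpr (Ne.symm hr'.1)
      have hj' : j - r' ≠ 0 := sub_ne_zero.mpr (Ne.symm hr'.2)
      simp only at h
      have h2 : l (i - r) + l (j - r') = l (i - r') + l (j - r) := by
        linear_combination h
      have h3 : (i - r) * (j - r') = (i - r') * (j - r) := by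
        rw [← hel _ hi, ← hel _ hj', ← hel _ hi', ← hel _ hj, ← headd, ← headd, h2]
      have h4 : (i - j) * (r - r') = 0 := by linear_combination h3
      rcases mul_eq_zero.mp h4 with h5 | h5
      · exact absurd (sub_eq_zero.mp h5) hij
      · exact sub_eq_zero.mp h5
    · -- SurjOn
      intro d hd
      simp only [Set.mem_singleton_iff, Set.mem_compl_iff] at hd
      set c : F := e d with hc
      have hc1 : c ≠ 1 := by
        rw [← he0]; intro h; exact hd (heinj h)
      have hc0 : c ≠ 0 := hene d
      have h1c : (1 : F) - c ≠ 0 := sub_ne_zero.mpr (Ne.symm hc1)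
      set r : F := (i - c * j) / (1 - c) with hrdef
      have hjr : j - r = (j - i) / (1 - c) := by
        rw [hrdef]; field_simp; ring
      have hir : i - r = c * (j - r) := by
        rw [hjr, hrdef]; field_simp; ring
      have hji : j - i ≠ 0 := sub_ne_zero.mpr (Ne.symm hij)
      have hjrne : j - r ≠ 0 := by rw [hjr]; exact div_ne_zero hji h1c
      have hirne : i - r ≠ 0 := by rw [hir]; exact mul_ne_zero hc0 hjrne
      refine ⟨r, ?_, ?_⟩
      · simp only [Set.mem_insert_iff, Set.mem_singleton_iff, Set.mem_compl_iff, not_or]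
        exact ⟨fun h => hirne (by rw [h]; ring), fun h => hjrne (by rw [h]; ring)⟩
      · simp only
        have h5 : e (l (i - r)) = e (d + l (j - r)) := by
          rw [headd, hel _ hirne, hel _ hjrne, ← hc, hir]
        have h6 := heinj h5
        rw [h6]; ring
end

section
/- Let n ≥ 3 be a prime power. Then there exist vectors u^(1), ..., u^(n+1) ∈ ℝ^(n+1), each with coordinate sum zero and with u^(i)_i = 0 and u^(i)_(n+1) = 0 for every i, such that for all i ≠ j the n - 1 coordinates of u^(i) - u^(j) with indices outside {i, j} are uniformly distributed modulo 1, i.e., their multiset of fractional parts equals {c, c + 1/(n-1), ..., c + (n-2)/(n-1)} modulo 1 for some real number c. -/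
def zmodFinEquiv (m : ℕ) [NeZero m] : ZMod m ≃ Fin m where
  toFun z := ⟨z.val, ZMod.val_lt z⟩
  invFun t := ((t : ℕ) : ZMod m)
  left_inv z := by simp [ZMod.natCast_val, ZMod.cast_id]
  right_inv t := by ext; simp [ZMod.val_cast_of_lt t.isLt]

lemma field_cross {F : Type*} [Field F] {a b x y : F}
    (h : (a - x) * (b - y) = (b - x) * (a - y)) (hxy : x ≠ y) : a = b := by
  have h2 : (a - b) * (x - y) = 0 := by linear_combination h
  rcases mul_eq_zero.mp h2 with h3 | h3
  · exact sub_eq_zero.mp h3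
  · exact absurd (sub_eq_zero.mp h3) hxy

lemma exists_psi (F : Type*) [Field F] [Fintype F] [DecidableEq F] (m : ℕ) [NeZero m]
    (hm : Fintype.card Fˣ = m) : ∃ ψ : Fˣ ≃ ZMod m, ∀ x y, ψ (x * y) = ψ x + ψ y := by
  obtain ⟨g, hg⟩ := IsCyclic.exists_generator (α := Fˣ)
  have ho : orderOf g = m := by
    rw [orderOf_eq_card_of_forall_mem_zpowers hg, Nat.card_eq_fintype_card, hm]
  set φ : ZMod m → Fˣ := fun t => g ^ t.val with hφ
  have hφmul : ∀ a b, φ (a + b) = φ a * φ b := by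
    intro a b
    rw [hφ]
    simp only
    rw [ZMod.val_add]
    have h3 := pow_mod_orderOf g (a.val + b.val)
    rw [ho] at h3
    rw [h3, pow_add]
  have hinj : Function.Injective φ := by
    intro a b h
    have h2 := pow_inj_mod.mp h
    rw [ho, Nat.mod_eq_of_lt (ZMod.val_lt a), Nat.mod_eq_of_lt (ZMod.val_lt b)] at h2
    have : ((a.val : ℕ) : ZMod m) = ((b.val : ℕ) : ZMod m) := by rw [h2]
    simpa [ZMod.natCast_val, ZMod.cast_id] using this
  have hbij : Function.Bijective φ :=
    (Fintype.bijective_iff_injective_and_card φ).2 ⟨hinj, by rw [ZMod.card, hm]⟩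
  refine ⟨(Equiv.ofBijective φ hbij).symm, fun x y => ?_⟩
  apply (Equiv.ofBijective φ hbij).injective
  rw [Equiv.apply_symm_apply]
  have : Equiv.ofBijective φ hbij (((Equiv.ofBijective φ hbij).symm x) + ((Equiv.ofBijective φ hbij).symm y)) = φ _ := rfl
  rw [this, hφmul]
  show x * y = Equiv.ofBijective φ hbij _ * Equiv.ofBijective φ hbij _
  rw [Equiv.apply_symm_apply, Equiv.apply_symm_apply]

lemma zmod_sum_val (m : ℕ) [NeZero m] : ∑ z : ZMod m, z.val = ∑ t ∈ Finset.range m, t := by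
  rw [← Fin.sum_univ_eq_sum_range]
  exact Fintype.sum_equiv (zmodFinEquiv m) _ _ (fun z => rfl)

/-- For a prime power `n ≥ 3` there exist vectors `u⁽¹⁾, …, u⁽ⁿ⁺¹⁾ ∈ ℝ^(n+1)`,
each with coordinate sum zero and with `u⁽ⁱ⁾_i = 0` and `u⁽ⁱ⁾_{n+1} = 0`, such
that for all `i ≠ j` the `n - 1` coordinates of `u⁽ⁱ⁾ - u⁽ʲ⁾` with indices
outside `{i, j}` are uniformly distributed modulo 1, i.e. their multiset of
fractional parts is `{c, c + 1/(n-1), …, c + (n-2)/(n-1)}` modulo 1 for some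
real `c`. -/
theorem exists_optimal_shifts (n : ℕ) (hn : 3 ≤ n) (hpp : IsPrimePow n) :
    ∃ u : Fin (n + 1) → (Fin (n + 1) → ℝ),
      (∀ i, ∑ k, u i k = 0) ∧
      (∀ i, u i i = 0) ∧
      (∀ i, u i (Fin.last n) = 0) ∧
      (∀ i j, i ≠ j →
        ∃ c : ℝ, ∃ e : {k : Fin (n + 1) // k ≠ i ∧ k ≠ j} ≃ Fin (n - 1),
          ∀ k : {k : Fin (n + 1) // k ≠ i ∧ k ≠ j}, ∃ m : ℤ,
            u i k.val - u j k.val = c + (((e k : Fin (n - 1)) : ℕ) : ℝ) / ((n : ℝ) - 1) + (m : ℝ)) := by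
  classical
  obtain ⟨p, κ, hp, hκ, hpκ⟩ := hpp
  haveI : Fact p.Prime := ⟨hp.nat_prime⟩
  set F := GaloisField p κ with hF
  haveI : Fintype F := Fintype.ofFinite F
  haveI : DecidableEq F := Classical.decEq F
  have hcardF : Fintype.card F = n := by
    rw [← Nat.card_eq_fintype_card, GaloisField.card p κ hκ.ne', hpκ]
  haveI : NeZero (n - 1) := ⟨by omega⟩
  have hcardU : Fintype.card Fˣ = n - 1 := by rw [Fintype.card_units, hcardF]
  obtain ⟨ψ, hψ⟩ := exists_psi F (n - 1) hcardU
  set e0 : Fin n ≃ F := Fintype.equivOfCardEq (by simp [hcardF]) with he0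
  set f : Fin (n + 1) → F := fun j => if h : (j : ℕ) < n then e0 ⟨j, h⟩ else 0 with hf
  have hlt : ∀ j : Fin (n + 1), j ≠ Fin.last n → (j : ℕ) < n := by
    intro j hj
    have h1 := j.isLt
    have h2 : (j : ℕ) ≠ n := fun h => hj (Fin.ext (by rw [h, Fin.val_last]))
    omega
  have hfval : ∀ (j : Fin (n + 1)) (h : (j : ℕ) < n), f j = e0 ⟨j, h⟩ := by
    intro j h; rw [hf]; exact dif_pos h
  have hfinj : ∀ j1 j2 : Fin (n + 1), j1 ≠ Fin.last n → j2 ≠ Fin.last n →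
      f j1 = f j2 → j1 = j2 := by
    intro j1 j2 h1 h2 he
    rw [hfval j1 (hlt j1 h1), hfval j2 (hlt j2 h2)] at he
    have := e0.injective he
    exact Fin.ext (by simpa [Fin.mk.injEq] using this)
  have hfsub : ∀ i k' : Fin (n + 1), i ≠ Fin.last n → k' ≠ Fin.last n → k' ≠ i →
      f k' - f i ≠ 0 := by
    intro i k' h1 h2 h3
    exact sub_ne_zero.mpr (fun h => h3 (hfinj k' i h2 h1 h))
  set G : Fin (n + 1) → Fin (n + 1) → ZMod (n - 1) := fun i k' =>
    if h : i = Fin.last n ∨ k' = Fin.last n ∨ k' = i then 0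
    else ψ (Units.mk0 (f k' - f i)
      (hfsub i k' (not_or.mp h).1 (not_or.mp (not_or.mp h).2).1 (not_or.mp (not_or.mp h).2).2))
    with hG
  have hGzero : ∀ i k', (i = Fin.last n ∨ k' = Fin.last n ∨ k' = i) → G i k' = 0 := by
    intro i k' h; rw [hG]; exact dif_pos h
  have hGval : ∀ (i k' : Fin (n + 1)) (h1 : i ≠ Fin.last n) (h2 : k' ≠ Fin.last n)
      (h3 : k' ≠ i), G i k' = ψ (Units.mk0 (f k' - f i) (hfsub i k' h1 h2 h3)) := by
    intro i k' h1 h2 h3; rw [hG]; exact dif_neg (by tauto)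
  set s : ℝ := -((n : ℝ) - 2) / (2 * ((n : ℝ) - 1)) with hs
  have hn3 : (3 : ℝ) ≤ (n : ℝ) := by exact_mod_cast hn
  have hne : (n : ℝ) - 1 ≠ 0 := by linarith
  set u : Fin (n + 1) → Fin (n + 1) → ℝ := fun i k' =>
    if i = Fin.last n ∨ k' = Fin.last n ∨ k' = i then 0
    else s + ((G i k').val : ℝ) / ((n : ℝ) - 1) with hu
  have hu0 : ∀ i k', (i = Fin.last n ∨ k' = Fin.last n ∨ k' = i) → u i k' = 0 := by
    intro i k' h; rw [hu]; exact if_pos h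
  have huv : ∀ i k', i ≠ Fin.last n → k' ≠ Fin.last n → k' ≠ i →
      u i k' = s + ((G i k').val : ℝ) / ((n : ℝ) - 1) := by
    intro i k' h1 h2 h3; rw [hu]; exact if_neg (by tauto)
  refine ⟨u, ?_, ?_, ?_, ?_⟩
  · -- sums are zero
    intro i
    by_cases hi : i = Fin.last n
    · exact Finset.sum_eq_zero fun k' _ => hu0 i k' (Or.inl hi)
    · have hzero : ∀ k' ∈ Finset.univ, k' ∉ Finset.univ \ ({Fin.last n, i} : Finset (Fin (n + 1))) →
          u i k' = 0 := by
        intro k' _ hk'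
        simp only [Finset.mem_sdiff, Finset.mem_univ, true_and, not_not, Finset.mem_insert,
          Finset.mem_singleton] at hk'
        rcases hk' with h | h
        · exact hu0 i k' (Or.inr (Or.inl h))
        · exact hu0 i k' (Or.inr (Or.inr h))
      rw [← Finset.sum_subset (Finset.sdiff_subset) hzero]
      have hT : ∀ k' ∈ Finset.univ \ ({Fin.last n, i} : Finset (Fin (n + 1))),
          u i k' = s + ((G i k').val : ℝ) / ((n : ℝ) - 1) := by
        intro k' hk'
        simp only [Finset.mem_sdiff, Finset.mem_insert, Finset.mem_singleton, not_or] at hk'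
        exact huv i k' hi hk'.2.1 hk'.2.2
      rw [Finset.sum_congr rfl hT, Finset.sum_add_distrib, Finset.sum_const, ← Finset.sum_div]
      have hcard2 : ({Fin.last n, i} : Finset (Fin (n + 1))).card = 2 := by
        rw [Finset.card_insert_of_notMem (by simpa using (Ne.symm hi)), Finset.card_singleton]
      have hcardT : (Finset.univ \ ({Fin.last n, i} : Finset (Fin (n + 1)))).card = n - 1 := by
        rw [Finset.card_sdiff_of_subset (Finset.subset_univ _), Finset.card_univ, Fintype.card_fin, hcard2]
        omega
      rw [hcardT]
      have hbijsum : ∑ k' ∈ Finset.univ \ ({Fin.last n, i} : Finset (Fin (n + 1))),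
          (((G i k').val : ℕ) : ℝ) = ∑ z : ZMod (n - 1), ((z.val : ℕ) : ℝ) := by
        apply Finset.sum_bij (i := fun k' _ => G i k')
        · intros; exact Finset.mem_univ _
        · intro k1 hk1 k2 hk2 hgg
          simp only [Finset.mem_sdiff, Finset.mem_insert, Finset.mem_singleton, not_or] at hk1 hk2
          rw [hGval i k1 hi hk1.2.1 hk1.2.2, hGval i k2 hi hk2.2.1 hk2.2.2] at hgg
          have h2 := ψ.injective hgg
          have h3 : f k1 - f i = f k2 - f i := by
            have h4 := congrArg Units.val h2; simpa using h4
          exact hfinj k1 k2 hk1.2.1 hk2.2.1 (sub_left_inj.mp h3)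
        · intro z _
          set x := ψ.symm z with hx
          have hxne : (x : F) ≠ 0 := x.ne_zero
          set k' : Fin (n + 1) := Fin.castSucc (e0.symm ((x : F) + f i)) with hk'
          have hklt : (k' : ℕ) < n := by rw [hk']; exact (e0.symm ((x : F) + f i)).isLt
          have hfk : f k' = (x : F) + f i := by
            rw [hfval k' hklt]
            have h5 : (⟨(k' : ℕ), hklt⟩ : Fin n) = e0.symm ((x : F) + f i) := by
              apply Fin.ext; simp [hk']
            rw [h5, Equiv.apply_symm_apply]
          have hkne : k' ≠ Fin.last n := by
            intro h; rw [h, Fin.val_last] at hklt; omega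
          have hki : k' ≠ i := by
            intro h
            apply hxne
            have h6 : f i = (x : F) + f i := by rw [← hfk, h]
            exact add_eq_right.mp h6.symm
          refine ⟨k', by simp [Finset.mem_sdiff, hkne, hki], ?_⟩
          rw [hGval i k' hi hkne hki]
          have h7 : Units.mk0 (f k' - f i) (hfsub i k' hi hkne hki) = x := by
            apply Units.ext
            rw [Units.val_mk0, hfk]; ring
          rw [h7]
          exact Equiv.apply_symm_apply ψ z
        · intro k hk; rfl
      rw [hbijsum]
      have hc1 : ((n - 1 : ℕ) : ℝ) = (n : ℝ) - 1 := by
        rw [Nat.cast_sub (by omega)]; norm_num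
      have h3 : (∑ z : ZMod (n - 1), z.val) * 2 = (n - 1) * (n - 2) := by
        rw [zmod_sum_val, Finset.sum_range_id_mul_two]
        have h9 : n - 1 - 1 = n - 2 := by omega
        rw [h9]
      have hcN : (∑ z : ZMod (n - 1), ((z.val : ℕ) : ℝ)) * 2 = ((n : ℝ) - 1) * ((n : ℝ) - 2) := by
        rw [← Nat.cast_sum]
        have h8 := congrArg (Nat.cast : ℕ → ℝ) h3
        push_cast at h8
        rw [Nat.cast_sub (by omega : 1 ≤ n), Nat.cast_sub (by omega : 2 ≤ n)] at h8
        push_cast at h8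
        push_cast
        linarith
      have hcNv : (∑ z : ZMod (n - 1), ((z.val : ℕ) : ℝ)) = ((n : ℝ) - 1) * ((n : ℝ) - 2) / 2 := by
        linarith
      rw [hcNv, nsmul_eq_mul, hc1, hs]
      field_simp
      ring
  · intro i; exact hu0 i i (Or.inr (Or.inr rfl))
  · intro i; exact hu0 i (Fin.last n) (Or.inr (Or.inl rfl))
  · -- pairs
    intro i j hij
    have hfij : i ≠ Fin.last n → j ≠ Fin.last n → f i ≠ f j :=
      fun h1 h2 h => hij (hfinj i j h1 h2 h)
    set c : ℝ := (if i = Fin.last n then 0 else s) - (if j = Fin.last n then 0 else s) with hc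
    set z : {k : Fin (n + 1) // k ≠ i ∧ k ≠ j} → ZMod (n - 1) := fun k => G i k.1 - G j k.1 with hz
    have hdiff : ∀ k' : Fin (n + 1), k' ≠ i → k' ≠ j →
        u i k' - u j k' = c + (((G i k').val : ℝ) - ((G j k').val : ℝ)) / ((n : ℝ) - 1) := by
      intro k' hki hkj
      by_cases hi : i = Fin.last n
      · have hj : j ≠ Fin.last n := fun hj => hij (by rw [hi, hj])
        have hkl : k' ≠ Fin.last n := by rw [← hi]; exact hki
        rw [hu0 i k' (Or.inl hi), huv j k' hj hkl hkj, hGzero i k' (Or.inl hi), hc,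
          if_pos hi, if_neg hj]
        simp only [ZMod.val_zero, Nat.cast_zero]
        ring
      · by_cases hj : j = Fin.last n
        · have hkl : k' ≠ Fin.last n := by rw [← hj]; exact hkj
          rw [hu0 j k' (Or.inl hj), huv i k' hi hkl hki, hGzero j k' (Or.inl hj), hc,
            if_neg hi, if_pos hj]
          simp only [ZMod.val_zero, Nat.cast_zero]
          ring
        · by_cases hkl : k' = Fin.last n
          · rw [hu0 i k' (Or.inr (Or.inl hkl)), hu0 j k' (Or.inr (Or.inl hkl)),
              hGzero i k' (Or.inr (Or.inl hkl)), hGzero j k' (Or.inr (Or.inl hkl)), hc,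
              if_neg hi, if_neg hj]
            simp only [ZMod.val_zero, Nat.cast_zero]
            ring
          · rw [huv i k' hi hkl hki, huv j k' hj hkl hkj, hc, if_neg hi, if_neg hj]
            ring
    have hc1 : ((n - 1 : ℕ) : ℝ) = (n : ℝ) - 1 := by
      rw [Nat.cast_sub (by omega)]; norm_num
    have hvd : ∀ a b : ZMod (n - 1), ∃ m : ℤ,
        ((a.val : ℝ) - (b.val : ℝ)) / ((n : ℝ) - 1)
          = (((a - b).val : ℝ)) / ((n : ℝ) - 1) + m := by
      intro a b
      have h0 : ((((a.val : ℤ) - (b.val : ℤ) - (((a - b).val : ℤ))) : ℤ) : ZMod (n - 1)) = 0 := by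
        push_cast
        rw [ZMod.natCast_val, ZMod.natCast_val, ZMod.natCast_val, ZMod.cast_id, ZMod.cast_id,
          ZMod.cast_id]
        ring
      obtain ⟨m, hm⟩ := (ZMod.intCast_zmod_eq_zero_iff_dvd _ _).mp h0
      refine ⟨m, ?_⟩
      have hm2 : ((a.val : ℝ) - (b.val : ℝ) - (((a - b).val : ℝ))) = ((n : ℝ) - 1) * m := by
        have h8 := congrArg (Int.cast : ℤ → ℝ) hm
        push_cast at h8
        rw [hc1] at h8
        linarith
      rw [show ((a.val : ℝ)) - (b.val : ℝ) = (((a - b).val : ℝ)) + ((n : ℝ) - 1) * m by linarith,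
        add_div]
      congr 1
      rw [mul_comm, mul_div_assoc, div_self hne, mul_one]
    have hzinj : Function.Injective z := by
      intro k1 k2 hzz
      apply Subtype.ext
      obtain ⟨hk1i, hk1j⟩ := k1.2
      obtain ⟨hk2i, hk2j⟩ := k2.2
      simp only [hz] at hzz
      by_cases hi : i = Fin.last n
      · have hj : j ≠ Fin.last n := fun hj => hij (by rw [hi, hj])
        have h1l : (k1 : Fin (n + 1)) ≠ Fin.last n := by rw [← hi]; exact hk1i
        have h2l : (k2 : Fin (n + 1)) ≠ Fin.last n := by rw [← hi]; exact hk2i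
        rw [hGzero i k1.1 (Or.inl hi), hGzero i k2.1 (Or.inl hi),
          hGval j k1.1 hj h1l hk1j, hGval j k2.1 hj h2l hk2j] at hzz
        simp only [zero_sub, neg_inj] at hzz
        have h6 := congrArg Units.val (ψ.injective hzz)
        simp only [Units.val_mk0] at h6
        exact hfinj k1.1 k2.1 h1l h2l (sub_left_inj.mp h6)
      · by_cases hj : j = Fin.last n
        · have h1l : (k1 : Fin (n + 1)) ≠ Fin.last n := by rw [← hj]; exact hk1j
          have h2l : (k2 : Fin (n + 1)) ≠ Fin.last n := by rw [← hj]; exact hk2j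
          rw [hGzero j k1.1 (Or.inl hj), hGzero j k2.1 (Or.inl hj),
            hGval i k1.1 hi h1l hk1i, hGval i k2.1 hi h2l hk2i] at hzz
          simp only [sub_zero] at hzz
          have h6 := congrArg Units.val (ψ.injective hzz)
          simp only [Units.val_mk0] at h6
          exact hfinj k1.1 k2.1 h1l h2l (sub_left_inj.mp h6)
        · by_cases h1l : (k1 : Fin (n + 1)) = Fin.last n
          · by_cases h2l : (k2 : Fin (n + 1)) = Fin.last n
            · rw [h1l, h2l]
            · exfalso
              rw [hGzero i k1.1 (Or.inr (Or.inl h1l)), hGzero j k1.1 (Or.inr (Or.inl h1l)),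
                hGval i k2.1 hi h2l hk2i, hGval j k2.1 hj h2l hk2j] at hzz
              simp only [sub_self] at hzz
              have h4 := sub_eq_zero.mp hzz.symm
              have h6 := congrArg Units.val (ψ.injective h4)
              simp only [Units.val_mk0] at h6
              exact hfij hi hj (sub_right_inj.mp h6)
          · by_cases h2l : (k2 : Fin (n + 1)) = Fin.last n
            · exfalso
              rw [hGzero i k2.1 (Or.inr (Or.inl h2l)), hGzero j k2.1 (Or.inr (Or.inl h2l)),
                hGval i k1.1 hi h1l hk1i, hGval j k1.1 hj h1l hk1j] at hzz
              simp only [sub_self] at hzz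
              have h4 := sub_eq_zero.mp hzz
              have h6 := congrArg Units.val (ψ.injective h4)
              simp only [Units.val_mk0] at h6
              exact hfij hi hj (sub_right_inj.mp h6)
            · rw [hGval i k1.1 hi h1l hk1i, hGval j k1.1 hj h1l hk1j,
                hGval i k2.1 hi h2l hk2i, hGval j k2.1 hj h2l hk2j] at hzz
              have h4 := sub_eq_sub_iff_add_eq_add.mp hzz
              rw [← hψ, ← hψ] at h4
              have h6 := congrArg Units.val (ψ.injective h4)
              simp only [Units.val_mul, Units.val_mk0] at h6
              exact hfinj k1.1 k2.1 h1l h2l (field_cross h6 (hfij hi hj))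
    have hcardsub : Fintype.card {k : Fin (n + 1) // k ≠ i ∧ k ≠ j} = n - 1 := by
      rw [Fintype.card_of_subtype (Finset.univ \ {i, j}) (by intro x; simp [not_or]),
        Finset.card_sdiff_of_subset (Finset.subset_univ _), Finset.card_univ, Fintype.card_fin,
        Finset.card_insert_of_notMem (by simpa using hij), Finset.card_singleton]
      omega
    have hzbij : Function.Bijective z :=
      (Fintype.bijective_iff_injective_and_card z).2 ⟨hzinj, by rw [hcardsub, ZMod.card]⟩
    refine ⟨c, (Equiv.ofBijective z hzbij).trans (zmodFinEquiv (n - 1)), ?_⟩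
    intro k
    obtain ⟨m, hm⟩ := hvd (G i k.1) (G j k.1)
    refine ⟨m, ?_⟩
    have he : ((((Equiv.ofBijective z hzbij).trans (zmodFinEquiv (n - 1))) k : Fin (n - 1)) : ℕ)
        = (G i k.1 - G j k.1).val := rfl
    rw [he, hdiff k.1 k.2.1 k.2.2, hm]
    ring
end

section
/- The set V = {x ∈ ℝ^4 : x_1 + x_2 + x_3 + x_4 = 0 and x_i - x_j ≤ 1/3 for all i ≠ j} is equal to the convex hull of the 14 points consisting of all coordinate permutations of (1/4, -1/12, -1/12, -1/12), all coordinate permutations of (-1/4, 1/12, 1/12, 1/12), and all coordinate permutations of (1/6, 1/6, -1/6, -1/6); this polytope is a rhombic dodecahedron. -/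
/-- The cell `V = {x ∈ ℝ⁴ : ∑ x_i = 0, x_i - x_j ≤ 1/3 for all i ≠ j}`. -/
def Vcell : Set (EuclideanSpace ℝ (Fin 4)) :=
  {x | (∑ i, x i = 0) ∧ ∀ i j, i ≠ j → x i - x j ≤ 1/3}

/-- All coordinate permutations of a vector `a ∈ ℝ⁴`. -/
def perms (a : EuclideanSpace ℝ (Fin 4)) : Set (EuclideanSpace ℝ (Fin 4)) :=
  {y | ∃ σ : Equiv.Perm (Fin 4), y = fun k => a (σ k)}

lemma convex_Vcell : Convex ℝ Vcell := by
  intro x hx y hy a b ha hb hab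
  refine ⟨?_, ?_⟩
  · have e : ∀ i : Fin 4, (a • x + b • y) i = a * x i + b * y i := fun i => by
      simp [PiLp.add_apply, PiLp.smul_apply]
    have hx1 := hx.1; have hy1 := hy.1
    rw [Fin.sum_univ_four] at hx1 hy1
    rw [Fin.sum_univ_four, e, e, e, e]
    nlinarith [hx1, hy1]
  · intro i j hij
    have h1 := hx.2 i j hij; have h2 := hy.2 i j hij
    have e1 : (a • x + b • y) i = a * x i + b * y i := by
      simp [PiLp.add_apply, PiLp.smul_apply]
    have e2 : (a • x + b • y) j = a * x j + b * y j := by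
      simp [PiLp.add_apply, PiLp.smul_apply]
    rw [e1, e2]
    nlinarith

lemma perms_subset_Vcell (a : EuclideanSpace ℝ (Fin 4)) (h1 : ∑ i, a i = 0)
    (h2 : ∀ i j, a i - a j ≤ 1/3) : perms a ⊆ Vcell := by
  rintro y ⟨σ, hy⟩
  have e : ∀ i, y i = a (σ i) := fun i => congrFun hy i
  refine ⟨?_, fun i j _ => ?_⟩
  · simp only [e]; rw [Equiv.sum_comp σ (fun i => a i)]; exact h1
  · rw [e, e]; exact h2 _ _

/-- `V` equals the convex hull of the 14 points consisting of all coordinate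
permutations of `(1/4, -1/12, -1/12, -1/12)`, of `(-1/4, 1/12, 1/12, 1/12)` and
of `(1/6, 1/6, -1/6, -1/6)` (a rhombic dodecahedron). -/
theorem Vcell_eq_convexHull :
    Vcell = convexHull ℝ
      (perms (WithLp.toLp 2 ![1/4, -1/12, -1/12, -1/12]) ∪
       perms (WithLp.toLp 2 ![-1/4, 1/12, 1/12, 1/12]) ∪
       perms (WithLp.toLp 2 ![1/6, 1/6, -1/6, -1/6])) := by
  set S : Set (EuclideanSpace ℝ (Fin 4)) :=
      (perms (WithLp.toLp 2 ![1/4, -1/12, -1/12, -1/12]) ∪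
       perms (WithLp.toLp 2 ![-1/4, 1/12, 1/12, 1/12]) ∪
       perms (WithLp.toLp 2 ![1/6, 1/6, -1/6, -1/6])) with hS
  apply le_antisymm
  · -- hard direction
    intro x hx
    obtain ⟨hsum, hle⟩ := hx
    set σ := Tuple.sort x with hσ
    have hmono : Monotone (x ∘ σ) := Tuple.monotone_sort x
    have h01 : x (σ 0) ≤ x (σ 1) := hmono (by decide)
    have h12 : x (σ 1) ≤ x (σ 2) := hmono (by decide)
    have h23 : x (σ 2) ≤ x (σ 3) := hmono (by decide)
    have hb : x (σ 3) - x (σ 0) ≤ 1/3 :=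
      hle (σ 3) (σ 0) (σ.injective.ne (by decide))
    have hS0 : x (σ 0) + x (σ 1) + x (σ 2) + x (σ 3) = 0 := by
      have := Equiv.sum_comp σ x
      rw [hsum, Fin.sum_univ_four] at this
      linarith [this.le, this.ge]
    set y0 := x (σ 0) with hy0
    set y1 := x (σ 1) with hy1
    set y2 := x (σ 2) with hy2
    set y3 := x (σ 3) with hy3
    -- weights
    set c1 : ℝ := 3*(y1 - y0) + (1 - 3*(y3 - y0))/2 with hc1
    set c2 : ℝ := 3*(y2 - y1) with hc2
    set c3 : ℝ := 3*(y3 - y2) with hc3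
    set c4 : ℝ := (1 - 3*(y3 - y0))/2 with hc4
    -- points
    set ρ2 : Equiv.Perm (Fin 4) := Equiv.swap 0 2 * Equiv.swap 1 3 with hρ2
    set z1 : EuclideanSpace ℝ (Fin 4) := WithLp.toLp 2 (fun k => ![-1/4, 1/12, 1/12, 1/12] (σ⁻¹ k)) with hz1
    set z2 : EuclideanSpace ℝ (Fin 4) := WithLp.toLp 2 (fun k => ![1/6, 1/6, -1/6, -1/6] ((ρ2 * σ⁻¹) k)) with hz2
    set z3 : EuclideanSpace ℝ (Fin 4) :=
      WithLp.toLp 2 (fun k => ![1/4, -1/12, -1/12, -1/12] ((Equiv.swap (0:Fin 4) 3 * σ⁻¹) k)) with hz3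
    set z4 : EuclideanSpace ℝ (Fin 4) := WithLp.toLp 2 (fun k => ![1/4, -1/12, -1/12, -1/12] (σ⁻¹ k)) with hz4
    have hz1S : z1 ∈ S := Or.inl (Or.inr ⟨σ⁻¹, rfl⟩)
    have hz2S : z2 ∈ S := Or.inr ⟨ρ2 * σ⁻¹, rfl⟩
    have hz3S : z3 ∈ S := Or.inl (Or.inl ⟨Equiv.swap (0:Fin 4) 3 * σ⁻¹, rfl⟩)
    have hz4S : z4 ∈ S := Or.inl (Or.inl ⟨σ⁻¹, rfl⟩)
    set w : Fin 4 → ℝ := ![c1, c2, c3, c4] with hw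
    set z : Fin 4 → EuclideanSpace ℝ (Fin 4) := ![z1, z2, z3, z4] with hz
    have mk : ∀ k : Fin 4, (∑ i, w i • z i) (σ k)
        = c1 * ![(-1:ℝ)/4, 1/12, 1/12, 1/12] k + c2 * ![(-1:ℝ)/6, -1/6, 1/6, 1/6] k
          + c3 * ![(-1:ℝ)/12, -1/12, -1/12, 1/4] k + c4 * ![(1:ℝ)/4, -1/12, -1/12, -1/12] k := by
      intro k
      have expand : (∑ i, w i • z i) (σ k)
          = c1 * z1 (σ k) + c2 * z2 (σ k) + c3 * z3 (σ k) + c4 * z4 (σ k) := by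
        simp [Fin.sum_univ_four, hw, hz, PiLp.add_apply, PiLp.smul_apply]
      have e1 : z1 (σ k) = ![(-1:ℝ)/4, 1/12, 1/12, 1/12] k := by simp [hz1]
      have e2 : z2 (σ k) = ![(1:ℝ)/6, 1/6, -1/6, -1/6] (ρ2 k) := by simp [hz2]
      have e3 : z3 (σ k) = ![(1:ℝ)/4, -1/12, -1/12, -1/12] (Equiv.swap (0:Fin 4) 3 k) := by
        simp [hz3]
      have e4 : z4 (σ k) = ![(1:ℝ)/4, -1/12, -1/12, -1/12] k := by simp [hz4]
      have hr2 : ![(1:ℝ)/6, 1/6, -1/6, -1/6] (ρ2 k) = ![(-1:ℝ)/6, -1/6, 1/6, 1/6] k := by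
        have h : ρ2 k = ![2, 3, 0, 1] k := by rw [hρ2]; fin_cases k <;> rfl
        rw [h]; fin_cases k <;> norm_num <;> rfl
      have hr3 : ![(1:ℝ)/4, -1/12, -1/12, -1/12] (Equiv.swap (0:Fin 4) 3 k)
          = ![(-1:ℝ)/12, -1/12, -1/12, 1/4] k := by
        have h : Equiv.swap (0:Fin 4) 3 k = ![3, 1, 2, 0] k := by fin_cases k <;> rfl
        rw [h]; fin_cases k <;> norm_num <;> rfl
      rw [expand, e1, e2, e3, e4, hr2, hr3]
    have key0 : y0 = (∑ i, w i • z i) (σ 0) := by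
      rw [mk 0]; norm_num [hc1, hc2, hc3, hc4]; linarith [hS0]
    have key1 : y1 = (∑ i, w i • z i) (σ 1) := by
      rw [mk 1]; norm_num [hc1, hc2, hc3, hc4]; linarith [hS0]
    have key2 : y2 = (∑ i, w i • z i) (σ 2) := by
      rw [mk 2]; show y2 = c1 * ((1:ℝ)/12) + c2 * ((1:ℝ)/6) + c3 * ((-1:ℝ)/12) + c4 * ((-1:ℝ)/12)
      norm_num [hc1, hc2, hc3, hc4]; linarith [hS0]
    have key3 : y3 = (∑ i, w i • z i) (σ 3) := by
      rw [mk 3]; show y3 = c1 * ((1:ℝ)/12) + c2 * ((1:ℝ)/6) + c3 * ((1:ℝ)/4) + c4 * ((-1:ℝ)/12)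
      norm_num [hc1, hc2, hc3, hc4]; linarith [hS0]
    have key : ∀ k : Fin 4, x (σ k) = (∑ i, w i • z i) (σ k) := by
      intro k
      fin_cases k
      · exact key0
      · exact key1
      · exact key2
      · exact key3
    have hxeq : x = ∑ i, w i • z i := by
      ext k
      have hk : k = σ (σ⁻¹ k) := (Equiv.apply_symm_apply σ k).symm
      rw [hk]
      exact key (σ⁻¹ k)
    have hw1 : 0 ≤ c1 := by rw [hc1]; linarith
    have hw2 : 0 ≤ c2 := by rw [hc2]; linarith
    have hw3 : 0 ≤ c3 := by rw [hc3]; linarith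
    have hw4 : 0 ≤ c4 := by rw [hc4]; linarith
    have hwsum : ∑ i, w i = 1 := by
      rw [hw]; simp [Fin.sum_univ_four, hc1, hc2, hc3, hc4]; ring
    rw [hxeq]
    refine (convex_convexHull ℝ S).sum_mem (fun i _ => ?_) hwsum (fun i _ => ?_)
    · fin_cases i
      · exact hw1
      · exact hw2
      · exact hw3
      · exact hw4
    · fin_cases i
      · exact subset_convexHull ℝ S hz1S
      · exact subset_convexHull ℝ S hz2S
      · exact subset_convexHull ℝ S hz3S
      · exact subset_convexHull ℝ S hz4S
  · refine convexHull_min ?_ convex_Vcell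
    refine Set.union_subset (Set.union_subset ?_ ?_) ?_ <;>
      refine perms_subset_Vcell _ ?_ ?_
    · simp [Fin.sum_univ_four]; norm_num
    · intro i j; fin_cases i <;> fin_cases j <;> norm_num
    · simp [Fin.sum_univ_four]; norm_num
    · intro i j; fin_cases i <;> fin_cases j <;> norm_num
    · simp [Fin.sum_univ_four]; norm_num
    · intro i j; fin_cases i <;> fin_cases j <;> norm_num
end
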